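/- arXiv:1312.6238 — 8 statements merged into one kernel-verified Lean document; each statement's English description precedes it below -/
import Mathlib

section
/- Let G be a finite group and O a conjugacy class in G. Then O is of type D as a rack if and only if there exist r, s ∈ O such that the conjugacy classes of r and s in the subgroup ⟨r, s⟩ are distinct and (rs)² ≠ (sr)². -/
/-- A subset of a group is a subrack if it is closed under conjugation `x ▷ y = x y x⁻¹`. -/
def IsSubrack {G : Type*} [Group G] (R : Set G) : Prop :=
  ∀ x ∈ R, ∀ y ∈ R, x * y * x⁻¹ ∈ R

/-- A subset `O` of a group (with the conjugation rack structure) is of type D if it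
contains a decomposable subrack `R ⊔ S` together with `r ∈ R`, `s ∈ S` such that
`r ▷ (s ▷ (r ▷ s)) ≠ s`. -/
def IsTypeD {G : Type*} [Group G] (O : Set G) : Prop :=
  ∃ R S : Set G, R ⊆ O ∧ S ⊆ O ∧ Disjoint R S ∧ IsSubrack R ∧ IsSubrack S ∧
    (∀ r ∈ R, ∀ s ∈ S, r * s * r⁻¹ ∈ S) ∧ (∀ s ∈ S, ∀ r ∈ R, s * r * s⁻¹ ∈ R) ∧
    ∃ r ∈ R, ∃ s ∈ S, r * (s * (r * s * r⁻¹) * s⁻¹) * r⁻¹ ≠ s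

lemma conj_eq_iff_sq {G : Type*} [Group G] (r s : G) :
    r * (s * (r * s * r⁻¹) * s⁻¹) * r⁻¹ = s ↔ (r * s) ^ 2 = (s * r) ^ 2 := by
  rw [pow_two, pow_two]
  constructor
  · intro h
    have h2 : r * s * (r * s) = (r * (s * (r * s * r⁻¹) * s⁻¹) * r⁻¹) * (r * s * r) := by group
    rw [h] at h2
    rw [h2]; group
  · intro h
    have h2 : r * (s * (r * s * r⁻¹) * s⁻¹) * r⁻¹ = (r * s * (r * s)) * (r * s * r)⁻¹ := by group
    rw [h2, h]; group

lemma conj_mem_iff_of_mapsTo {G : Type*} [Group G] [Fintype G] {R : Set G} {g : G}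
    (h : ∀ y ∈ R, g * y * g⁻¹ ∈ R) : ∀ y, y ∈ R ↔ g * y * g⁻¹ ∈ R := by
  intro y
  refine ⟨fun hy => h y hy, fun hy => ?_⟩
  have hinj : Set.InjOn (fun y => g * y * g⁻¹) R := by
    intro a _ b _ hab
    simp only at hab
    exact mul_left_cancel (mul_right_cancel hab)
  have hsurj : Set.SurjOn (fun y => g * y * g⁻¹) R R :=
    ((R.toFinite.injOn_iff_bijOn_of_mapsTo h).mp hinj).surjOn
  obtain ⟨z, hz, hz'⟩ := hsurj hy
  simp only at hz'
  have : z = y := mul_left_cancel (mul_right_cancel hz')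
  exact this ▸ hz

/-- A conjugacy class `O` of a finite group `G` is of type D as a rack if and only if
there exist `r, s ∈ O` whose conjugacy classes in the subgroup `⟨r, s⟩` are distinct
and such that `(rs)² ≠ (sr)²`. -/
theorem stmt2 {G : Type*} [Group G] [Fintype G] (x : G) :
    IsTypeD {y : G | IsConj x y} ↔
      ∃ r ∈ {y : G | IsConj x y}, ∃ s ∈ {y : G | IsConj x y},
        (¬ ∃ k ∈ Subgroup.closure {r, s}, k * r * k⁻¹ = s) ∧
        (r * s) ^ 2 ≠ (s * r) ^ 2 := by
  constructor
  · rintro ⟨R, S, hRO, hSO, hdis, hR, hS, hRS, hSR, r, hr, s, hs, hne⟩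
    refine ⟨r, hRO hr, s, hSO hs, ?_, fun h => hne ((conj_eq_iff_sq r s).mpr h)⟩
    rintro ⟨k, hk, hconj⟩
    have key : ∀ k ∈ Subgroup.closure ({r, s} : Set G),
        ∀ y, (y ∈ R ↔ k * y * k⁻¹ ∈ R) := by
      intro k hk
      induction hk using Subgroup.closure_induction with
      | mem g hg =>
        rcases hg with hg | hg
        · exact hg ▸ conj_mem_iff_of_mapsTo (fun y hy => hR r hr y hy)
        · simp only [Set.mem_singleton_iff] at hg
          exact hg ▸ conj_mem_iff_of_mapsTo (fun y hy => hSR s hs y hy)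
      | one => simp
      | mul a b ha hb iha ihb =>
        intro y
        rw [ihb y, iha (b * y * b⁻¹)]
        constructor <;> intro h <;> [skip; skip] <;>
          · convert h using 1; group
      | inv a ha iha =>
        intro y
        rw [iha (a⁻¹ * y * a⁻¹⁻¹)]
        constructor <;> intro h <;>
          · convert h using 1; group
    have hmem : k * r * k⁻¹ ∈ R := (key k hk r).mp hr
    rw [hconj] at hmem
    exact Set.disjoint_left.mp hdis hmem hs
  · rintro ⟨r, hr, s, hs, hncon, hsq⟩
    set H := Subgroup.closure ({r, s} : Set G) with hH
    have hrH : r ∈ H := Subgroup.subset_closure (by simp)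
    have hsH : s ∈ H := Subgroup.subset_closure (by simp)
    refine ⟨{y | ∃ k ∈ H, k * r * k⁻¹ = y}, {y | ∃ k ∈ H, k * s * k⁻¹ = y},
      ?_, ?_, ?_, ?_, ?_, ?_, ?_, r, ⟨1, one_mem _, by group⟩, s, ⟨1, one_mem _, by group⟩,
      fun h => hsq ((conj_eq_iff_sq r s).mp h)⟩
    · rintro y ⟨k, hk, rfl⟩
      exact hr.trans (isConj_iff.mpr ⟨k, rfl⟩)
    · rintro y ⟨k, hk, rfl⟩
      exact hs.trans (isConj_iff.mpr ⟨k, rfl⟩)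
    · rw [Set.disjoint_left]
      rintro a ⟨k, hk, rfl⟩ ⟨k', hk', heq⟩
      refine hncon ⟨k'⁻¹ * k, mul_mem (inv_mem hk') hk, ?_⟩
      have : k' * (k'⁻¹ * k * r * (k'⁻¹ * k)⁻¹) * k'⁻¹ = k * r * k⁻¹ := by group
      calc k'⁻¹ * k * r * (k'⁻¹ * k)⁻¹ = k'⁻¹ * (k * r * k⁻¹) * k' := by group
        _ = k'⁻¹ * (k' * s * k'⁻¹) * k' := by rw [heq]
        _ = s := by group
    · rintro a ⟨k, hk, rfl⟩ b ⟨k', hk', rfl⟩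
      have haH : k * r * k⁻¹ ∈ H := mul_mem (mul_mem hk hrH) (inv_mem hk)
      exact ⟨k * r * k⁻¹ * k', mul_mem haH hk', by group⟩
    · rintro a ⟨k, hk, rfl⟩ b ⟨k', hk', rfl⟩
      have haH : k * s * k⁻¹ ∈ H := mul_mem (mul_mem hk hsH) (inv_mem hk)
      exact ⟨k * s * k⁻¹ * k', mul_mem haH hk', by group⟩
    · rintro a ⟨k, hk, rfl⟩ b ⟨k', hk', rfl⟩
      have haH : k * r * k⁻¹ ∈ H := mul_mem (mul_mem hk hrH) (inv_mem hk)
      exact ⟨k * r * k⁻¹ * k', mul_mem haH hk', by group⟩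
    · rintro a ⟨k, hk, rfl⟩ b ⟨k', hk', rfl⟩
      have haH : k * s * k⁻¹ ∈ H := mul_mem (mul_mem hk hsH) (inv_mem hk)
      exact ⟨k * s * k⁻¹ * k', mul_mem haH hk', by group⟩
end

section
/- Let G be a finite group and O a conjugacy class in G. Then O is of type F if and only if there exist r₁, r₂, r₃, r₄ ∈ O such that the conjugacy classes of the rₐ in the subgroup K = ⟨r₁, r₂, r₃, r₄⟩ are pairwise distinct and rₐ r_b ≠ r_b rₐ for all a ≠ b. -/
/-- A subset `O` of a group (with the conjugation rack structure) is of type F if it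
has four subracks `R₁, R₂, R₃, R₄`, pairwise disjoint, with `Rₐ ▷ R_b = R_b` for
`a ≠ b`, together with elements `rₐ ∈ Rₐ` with `rₐ ▷ r_b ≠ r_b` for `a ≠ b`. -/
def IsTypeF {G : Type*} [Group G] (O : Set G) : Prop :=
  ∃ R : Fin 4 → Set G, (∀ a, R a ⊆ O) ∧ (∀ a, IsSubrack (R a)) ∧
    (∀ a b, a ≠ b → Disjoint (R a) (R b)) ∧
    (∀ a b, a ≠ b → {z | ∃ r ∈ R a, ∃ s ∈ R b, z = r * s * r⁻¹} = R b) ∧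
    ∃ r : Fin 4 → G, (∀ a, r a ∈ R a) ∧
      ∀ a b, a ≠ b → r a * r b * (r a)⁻¹ ≠ r b

/-- A conjugacy class `O` of a finite group `G` is of type F as a rack if and only if
there exist `r₁, r₂, r₃, r₄ ∈ O` whose conjugacy classes in the subgroup
`K = ⟨r₁, r₂, r₃, r₄⟩` are pairwise distinct and which pairwise do not commute. -/
theorem stmt3 {G : Type*} [Group G] [Fintype G] (x : G) :
    IsTypeF {y : G | IsConj x y} ↔
      ∃ r : Fin 4 → G, (∀ a, r a ∈ {y : G | IsConj x y}) ∧
        (∀ a b, a ≠ b →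
          ¬ ∃ k ∈ Subgroup.closure (Set.range r), k * r a * k⁻¹ = r b) ∧
        ∀ a b, a ≠ b → r a * r b ≠ r b * r a := by
  constructor
  · rintro ⟨R, hRO, hSub, hDisj, hConj, r, hr, hne⟩
    refine ⟨r, fun a => hRO a (hr a), ?_, ?_⟩
    · -- each generator maps `R a` onto itself by conjugation
      have gen : ∀ (a : Fin 4) (k : G), k ∈ Set.range r →
          (fun s => k * s * k⁻¹) '' R a = R a := by
        intro a k hk
        rcases hk with ⟨c, rfl⟩
        have hsub : (fun s => r c * s * (r c)⁻¹) '' R a ⊆ R a := by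
          rintro _ ⟨s, hs, rfl⟩
          by_cases hca : c = a
          · subst hca; exact hSub c (r c) (hr c) s hs
          · rw [← hConj c a hca]
            exact ⟨r c, hr c, s, hs, rfl⟩
        have hinj : Function.Injective (fun s => r c * s * (r c)⁻¹) := by
          intro u v huv
          simpa using huv
        apply Set.eq_of_subset_of_ncard_le hsub
        rw [Set.ncard_image_of_injective _ hinj]
      have key : ∀ a, ∀ k ∈ Subgroup.closure (Set.range r),
          (fun s => k * s * k⁻¹) '' R a = R a := by
        intro a k hk
        induction hk using Subgroup.closure_induction with
        | mem y hy => exact gen a y hy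
        | one => simp
        | mul u v hu hv ihu ihv =>
          have : (fun s => u * v * s * (u * v)⁻¹) =
              (fun s => u * s * u⁻¹) ∘ (fun s => v * s * v⁻¹) := by
            funext s; simp [mul_assoc]
          rw [this, Set.image_comp, ihv, ihu]
        | inv u hu ihu =>
          have := congrArg (Set.image (fun s => u⁻¹ * s * u⁻¹⁻¹)) ihu
          rw [← Set.image_comp] at this
          have h2 : ((fun s => u⁻¹ * s * u⁻¹⁻¹) ∘ fun s => u * s * u⁻¹) = id := by
            funext s; simp [mul_assoc]
          rw [h2, Set.image_id] at this
          exact this.symm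
      intro a b hab hex
      obtain ⟨k, hk, hkr⟩ := hex
      have hmem : k * r a * k⁻¹ ∈ R a := by
        rw [← key a k hk]; exact ⟨r a, hr a, rfl⟩
      rw [hkr] at hmem
      exact Set.disjoint_left.mp (hDisj a b hab) hmem (hr b)
    · intro a b hab h
      exact hne a b hab (by rw [h, mul_inv_cancel_right])
  · rintro ⟨r, hrO, hcls, hcomm⟩
    set K := Subgroup.closure (Set.range r) with hK
    refine ⟨fun a => (fun k => k * r a * k⁻¹) '' (K : Set G), ?_, ?_, ?_, ?_, r, ?_, ?_⟩
    · rintro a z ⟨k, hk, rfl⟩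
      exact (hrO a).trans (isConj_iff.mpr ⟨k, rfl⟩)
    · rintro a _ ⟨k, hk, rfl⟩ _ ⟨k', hk', rfl⟩
      refine ⟨(k * r a * k⁻¹) * k', mul_mem ?_ hk', by group⟩
      exact mul_mem (mul_mem hk (Subgroup.subset_closure ⟨a, rfl⟩)) (inv_mem hk)
    · intro a b hab
      rw [Set.disjoint_left]
      rintro _ ⟨k, hk, rfl⟩ ⟨k', hk', heq⟩
      simp only at heq
      refine hcls a b hab ⟨k'⁻¹ * k, mul_mem (inv_mem hk') hk, ?_⟩
      have h2 : k'⁻¹ * (k * r a * k⁻¹) * k' = r b := by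
        rw [← heq]; group
      rw [← h2]; group
    · intro a b hab
      ext z
      constructor
      · rintro ⟨_, ⟨k, hk, rfl⟩, _, ⟨k', hk', rfl⟩, rfl⟩
        refine ⟨(k * r a * k⁻¹) * k', mul_mem ?_ hk', by group⟩
        exact mul_mem (mul_mem hk (Subgroup.subset_closure ⟨a, rfl⟩)) (inv_mem hk)
      · rintro ⟨k, hk, rfl⟩
        refine ⟨r a, ⟨1, one_mem _, by group⟩, (r a)⁻¹ * k * r b * ((r a)⁻¹ * k)⁻¹,
          ⟨(r a)⁻¹ * k, mul_mem (inv_mem (Subgroup.subset_closure ⟨a, rfl⟩)) hk, by group⟩,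
          by group⟩
    · intro a
      exact ⟨1, one_mem _, by group⟩
    · intro a b hab h
      exact hcomm a b hab (mul_inv_eq_iff_eq_mul.mp h)
end

section
/- For n odd, the rack of involutions (reflections) in the dihedral group D_n of order 2n is sober: every subrack of it is either abelian or indecomposable. -/
/-- A subrack is abelian when conjugation acts trivially on it. -/
def IsAbelianRack {G : Type*} [Group G] (X : Set G) : Prop :=
  ∀ x ∈ X, ∀ y ∈ X, x * y * x⁻¹ = y

/-- A subrack is indecomposable when it is not the disjoint union of two
nonempty subracks. -/
def IsIndecomposableRack {G : Type*} [Group G] (X : Set G) : Prop :=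
  ¬ ∃ A B : Set G, A.Nonempty ∧ B.Nonempty ∧ Disjoint A B ∧ A ∪ B = X ∧
      IsSubrack A ∧ IsSubrack B

/-- A subset of `ZMod n` containing `0` and closed under `(x, y) ↦ 2x - y`
is an additive subgroup, provided `2` is invertible. -/
lemma aux_subgroup {n : ℕ} [NeZero n] (h2 : IsUnit (2 : ZMod n)) (T : Set (ZMod n))
    (h0 : (0 : ZMod n) ∈ T) (hcl : ∀ x ∈ T, ∀ y ∈ T, 2 * x - y ∈ T) :
    ∃ H : AddSubgroup (ZMod n), (H : Set (ZMod n)) = T := by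
  have hneg : ∀ y ∈ T, -y ∈ T := by
    intro y hy
    have := hcl 0 h0 y hy
    simpa using this
  have hdouble : ∀ x ∈ T, 2 * x ∈ T := by
    intro x hx
    have := hcl x hx 0 h0
    simpa using this
  have hadd : ∀ x ∈ T, ∀ y ∈ T, x + y ∈ T := by
    intro x hx y hy
    -- the doubling map on T is injective, hence surjective since T is finite
    set f : T → T := fun t => ⟨2 * (t : ZMod n), hdouble t t.2⟩ with hf
    have hinj : Function.Injective f := by
      intro a b hab
      have : 2 * (a : ZMod n) = 2 * (b : ZMod n) := congrArg Subtype.val hab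
      exact Subtype.ext (h2.mul_left_cancel this)
    have hsurj : Function.Surjective f := (Finite.injective_iff_surjective (f := f)).mp hinj
    obtain ⟨u, hu⟩ := hsurj ⟨x, hx⟩
    have hux : 2 * (u : ZMod n) = x := congrArg Subtype.val hu
    have := hcl u u.2 (-y) (hneg y hy)
    rwa [sub_neg_eq_add, hux] at this
  exact ⟨{ carrier := T, zero_mem' := h0, add_mem' := fun ha hb => hadd _ ha _ hb,
           neg_mem' := fun ha => hneg _ ha }, rfl⟩

/-- For `n` odd, the rack of involutions of the dihedral group `D_n` of order `2n`
is sober: every subrack of it is either abelian or indecomposable. -/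
theorem stmt5 (n : ℕ) (hn : Odd n) (X : Set (DihedralGroup n))
    (hXinv : ∀ x ∈ X, orderOf x = 2) (hX : IsSubrack X) :
    IsAbelianRack X ∨ IsIndecomposableRack X := by
  right
  rintro ⟨A, B, ⟨xa, hxa⟩, ⟨xb, hxb⟩, hdisj, hunion, hsubA, hsubB⟩
  haveI : NeZero n := ⟨hn.pos.ne'⟩
  have hn2 : ¬ (2 ∣ n) := by
    have := Nat.odd_iff.mp hn
    omega
  have h2 : IsUnit (2 : ZMod n) := by
    have : ((2 : ℕ) : ZMod n) = (2 : ZMod n) := by norm_cast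
    rw [← this, ZMod.isUnit_iff_coprime]
    exact (Nat.prime_two.coprime_iff_not_dvd).mpr hn2
  -- every element of X is a reflection
  have hsr : ∀ x ∈ X, ∃ i : ZMod n, x = DihedralGroup.sr i := by
    intro x hx
    cases x with
    | sr i => exact ⟨i, rfl⟩
    | r i =>
      exfalso
      have h := hXinv _ hx
      rw [DihedralGroup.orderOf_r] at h
      exact hn2 (h ▸ Nat.div_dvd_of_dvd (Nat.gcd_dvd_left n i.val))
  -- inverse and conjugation formulas for reflections
  have hinv : ∀ i : ZMod n, (DihedralGroup.sr i)⁻¹ = DihedralGroup.sr i := by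
    intro i
    rw [eq_comm, eq_inv_iff_mul_eq_one, DihedralGroup.sr_mul_sr, sub_self,
      DihedralGroup.one_def]
  have hconj : ∀ i j : ZMod n,
      DihedralGroup.sr i * DihedralGroup.sr j * (DihedralGroup.sr i)⁻¹ =
        DihedralGroup.sr (2 * i - j) := by
    intro i j
    rw [hinv, DihedralGroup.sr_mul_sr, DihedralGroup.r_mul_sr]
    congr 1
    ring
  -- index sets and their closure under (i, j) ↦ 2i - j
  have hclosed : ∀ (Y : Set (DihedralGroup n)), IsSubrack Y →
      ∀ i : ZMod n, DihedralGroup.sr i ∈ Y → ∀ j : ZMod n, DihedralGroup.sr j ∈ Y →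
        DihedralGroup.sr (2 * i - j) ∈ Y := by
    intro Y hY i hi j hj
    have := hY _ hi _ hj
    rwa [hconj] at this
  -- base points
  have hxaX : xa ∈ X := hunion ▸ Or.inl hxa
  have hxbX : xb ∈ X := hunion ▸ Or.inr hxb
  obtain ⟨ia, rfl⟩ := hsr xa hxaX
  obtain ⟨ib, rfl⟩ := hsr xb hxbX
  -- translated index sets are subgroups
  have mk_subgroup : ∀ (Y : Set (DihedralGroup n)), IsSubrack Y →
      ∀ c : ZMod n, DihedralGroup.sr c ∈ Y →
      ∃ H : AddSubgroup (ZMod n),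
        (H : Set (ZMod n)) = {x : ZMod n | DihedralGroup.sr (x + c) ∈ Y} := by
    intro Y hY c hc
    apply aux_subgroup h2
    · simpa using hc
    · intro x hx y hy
      have := hclosed Y hY (x + c) hx (y + c) hy
      have harg : 2 * (x + c) - (y + c) = (2 * x - y) + c := by ring
      rw [harg] at this
      exact this
  obtain ⟨H, hH⟩ := mk_subgroup X hX ia hxaX
  obtain ⟨HA, hHA⟩ := mk_subgroup A hsubA ia hxa
  obtain ⟨HB, hHB⟩ := mk_subgroup B hsubB ib hxb
  have hHmem : ∀ x : ZMod n, x ∈ H ↔ DihedralGroup.sr (x + ia) ∈ X := by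
    intro x
    rw [← SetLike.mem_coe, hH]; rfl
  have hHAmem : ∀ x : ZMod n, x ∈ HA ↔ DihedralGroup.sr (x + ia) ∈ A := by
    intro x
    rw [← SetLike.mem_coe, hHA]; rfl
  have hHBmem : ∀ x : ZMod n, x ∈ HB ↔ DihedralGroup.sr (x + ib) ∈ B := by
    intro x
    rw [← SetLike.mem_coe, hHB]; rfl
  -- HA ≤ H and HB ≤ H
  have hAleH : HA ≤ H := by
    intro x hx
    rw [hHAmem] at hx
    rw [hHmem]
    exact hunion ▸ Or.inl hx
  have hBleH : HB ≤ H := by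
    intro x hx
    rw [hHBmem] at hx
    have h1 : x + ib - ia ∈ H := by
      rw [hHmem]
      have : x + ib - ia + ia = x + ib := by ring
      rw [this]
      exact hunion ▸ Or.inr hx
    have h2' : ib - ia ∈ H := by
      rw [hHmem]
      have : ib - ia + ia = ib := by ring
      rw [this]
      exact hxbX
    have := sub_mem h1 h2'
    have harg : x + ib - ia - (ib - ia) = x := by ring
    rwa [harg] at this
  -- cardinalities: translated sets are in bijection with the original index sets
  have card_eq : ∀ (Y : Set (DihedralGroup n)) (c : ZMod n) (K : AddSubgroup (ZMod n)),
      (K : Set (ZMod n)) = {x : ZMod n | DihedralGroup.sr (x + c) ∈ Y} →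
      Nat.card K = ({i : ZMod n | DihedralGroup.sr i ∈ Y}).ncard := by
    intro Y c K hK
    have h1 : Nat.card K = ((K : Set (ZMod n))).ncard :=
      Nat.card_coe_set_eq _
    rw [h1, hK]
    have himg : (fun x : ZMod n => x + c) '' {x : ZMod n | DihedralGroup.sr (x + c) ∈ Y}
        = {i : ZMod n | DihedralGroup.sr i ∈ Y} := by
      ext i
      constructor
      · rintro ⟨x, hx, rfl⟩; exact hx
      · intro hi; exact ⟨i - c, by simpa using hi, by ring⟩
    rw [← himg]
    rw [Set.ncard_image_of_injective _ (add_left_injective c)]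
  have eH := card_eq X ia H hH
  have eHA := card_eq A ia HA hHA
  have eHB := card_eq B ib HB hHB
  -- the index sets of A and B partition that of X
  have hSunion : {i : ZMod n | DihedralGroup.sr i ∈ A} ∪ {i : ZMod n | DihedralGroup.sr i ∈ B}
      = {i : ZMod n | DihedralGroup.sr i ∈ X} := by
    ext i
    simp only [Set.mem_union, Set.mem_setOf_eq, ← hunion]
  have hSdisj : Disjoint {i : ZMod n | DihedralGroup.sr i ∈ A}
      {i : ZMod n | DihedralGroup.sr i ∈ B} := by
    rw [Set.disjoint_left]
    intro i hiA hiB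
    exact Set.disjoint_left.mp hdisj hiA hiB
  have hsum : ({i : ZMod n | DihedralGroup.sr i ∈ A}).ncard
      + ({i : ZMod n | DihedralGroup.sr i ∈ B}).ncard
      = ({i : ZMod n | DihedralGroup.sr i ∈ X}).ncard := by
    rw [← hSunion]
    exact (Set.ncard_union_eq hSdisj (Set.toFinite _) (Set.toFinite _)).symm
  -- divisibility and parity give the contradiction
  have hdvdA : Nat.card HA ∣ Nat.card H := AddSubgroup.card_dvd_of_le hAleH
  have hdvdB : Nat.card HB ∣ Nat.card H := AddSubgroup.card_dvd_of_le hBleH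
  have hHodd : ¬ (2 ∣ Nat.card H) := by
    intro hdvd
    have := AddSubgroup.card_addSubgroup_dvd_card H
    rw [Nat.card_zmod] at this
    exact hn2 (hdvd.trans this)
  have hApos : 0 < Nat.card HA := Nat.card_pos
  have hBpos : 0 < Nat.card HB := Nat.card_pos
  have hsum' : Nat.card HA + Nat.card HB = Nat.card H := by
    rw [eHA, eHB, eH]; exact hsum
  have hAB : Nat.card HA ∣ Nat.card HB := by
    have : Nat.card HB = Nat.card H - Nat.card HA := by omega
    rw [this]
    exact Nat.dvd_sub hdvdA dvd_rfl
  have hBA : Nat.card HB ∣ Nat.card HA := by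
    have : Nat.card HA = Nat.card H - Nat.card HB := by omega
    rw [this]
    exact Nat.dvd_sub hdvdB dvd_rfl
  have heq : Nat.card HA = Nat.card HB := Nat.dvd_antisymm hAB hBA
  exact hHodd ⟨Nat.card HA, by omega⟩
end

section
/- Let q be a prime power, n ≥ 2, and for a ∈ F_q^× let r_a ∈ SL_n(q) be the upper-triangular unipotent matrix with 1's on the diagonal, entries a, 1, 1, …, 1 on the superdiagonal, and 0 elsewhere. Then r_a and r_b are conjugate in SL_n(q) if and only if b = θⁿ a for some θ ∈ F_q^×. Consequently the number of regular unipotent conjugacy classes in SL_n(q) equals gcd(n, q−1). -/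
/-- The unipotent upper bidiagonal matrix `r_a` with `1`s on the diagonal and
superdiagonal `(a, 1, 1, …, 1)`. -/
def rMat {F : Type*} [Field F] (n : ℕ) (a : F) : Matrix (Fin n) (Fin n) F :=
  fun i j =>
    if (j : ℕ) = (i : ℕ) then 1
    else if (j : ℕ) = (i : ℕ) + 1 then (if (i : ℕ) = 0 then a else 1)
    else 0

namespace Stmt8

set_option linter.unusedSectionVars false
set_option linter.unusedVariables false
set_option linter.unnecessarySimpa false

variable {F : Type*} [Field F]

def nMat (n : ℕ) (a : F) : Matrix (Fin n) (Fin n) F :=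
  fun i j => if (j : ℕ) = (i : ℕ) + 1 then (if (i : ℕ) = 0 then a else 1) else 0

lemma rMat_eq (n : ℕ) (a : F) : rMat n a = 1 + nMat n a := by
  ext i j
  simp only [rMat, nMat, Matrix.add_apply, Matrix.one_apply]
  rcases eq_or_ne (j : ℕ) (i : ℕ) with h | h
  · have : i = j := Fin.ext h.symm
    simp [this, h]
  · have : ¬ i = j := fun hh => h (by rw [hh])
    simp [h, this]

lemma nMat_pow (n : ℕ) (a : F) (k : ℕ) (i j : Fin n) :
    ((nMat n a) ^ k) i j =
      if (j : ℕ) = (i : ℕ) + k then (if (i : ℕ) = 0 ∧ k ≠ 0 then a else 1) else 0 := by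
  induction k generalizing j with
  | zero =>
    simp only [pow_zero, Matrix.one_apply, add_zero]
    rcases eq_or_ne (j : ℕ) (i : ℕ) with h | h
    · simp [Fin.ext h.symm, h]
    · have : ¬ i = j := fun hh => h (by rw [hh])
      simp [h, this]
  | succ k ih =>
    rw [pow_succ, Matrix.mul_apply]
    rcases eq_or_ne (j : ℕ) ((i : ℕ) + (k + 1)) with h | h
    · rw [if_pos h]
      have hik : (i : ℕ) + k < n := by omega
      rw [Finset.sum_eq_single ⟨(i : ℕ) + k, hik⟩]
      · rw [ih, nMat]
        simp only [Fin.val_mk]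
        split_ifs <;> first | ring1 | (exfalso; omega)
      · intro b _ hb
        rw [ih]
        have : ¬ (b : ℕ) = (i : ℕ) + k := fun hh => hb (Fin.ext (by simpa using hh))
        rw [if_neg this, zero_mul]
      · intro hme; exact absurd (Finset.mem_univ _) hme
    · rw [if_neg h]
      apply Finset.sum_eq_zero
      intro b _
      rcases eq_or_ne ((b : ℕ)) ((i : ℕ) + k) with hb | hb
      · have : ¬ (j : ℕ) = (b : ℕ) + 1 := by omega
        rw [nMat, if_neg this, mul_zero]
      · rw [ih, if_neg hb, zero_mul]

lemma nMat_pow_n (n : ℕ) (a : F) : (nMat n a) ^ n = 0 := by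
  ext i j
  rw [nMat_pow]
  have : ¬ (j : ℕ) = (i : ℕ) + n := by have := j.isLt; omega
  simp [this]

lemma nMat_pow_pred (n : ℕ) (hn : 2 ≤ n) (a : F) (ha : a ≠ 0) :
    (nMat n a) ^ (n - 1) ≠ 0 := by
  intro h
  have h0 : (0 : ℕ) < n := by omega
  have hn1 : n - 1 < n := by omega
  have h2 : ((nMat n a) ^ (n - 1)) ⟨0, h0⟩ ⟨n - 1, hn1⟩ = a := by
    rw [nMat_pow]
    simp [show n - 1 ≠ 0 by omega]
  rw [h] at h2
  simp only [Matrix.zero_apply] at h2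
  exact ha h2.symm

lemma rMat_det (n : ℕ) (a : F) : (rMat n a).det = 1 := by
  have hbt : (rMat n a).BlockTriangular id := by
    intro i j hij
    have h1 : ¬ (j : ℕ) = (i : ℕ) := by exact fun hh => absurd (Fin.ext hh : j = i) (by intro e; subst e; exact lt_irrefl _ hij)
    have h2 : ¬ (j : ℕ) = (i : ℕ) + 1 := by
      have : (j : ℕ) < (i : ℕ) := hij
      omega
    simp [rMat, h1, h2]
  rw [Matrix.det_of_upperTriangular hbt]
  apply Finset.prod_eq_one
  intro i _
  simp [rMat]

lemma Cext {n : ℕ} (C : Matrix (Fin n) (Fin n) F) {i i' j j' : Fin n}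
    (hi : (i : ℕ) = (i' : ℕ)) (hj : (j : ℕ) = (j' : ℕ)) : C i j = C i' j' := by
  rw [Fin.ext hi, Fin.ext hj]

lemma mul_nMat (n : ℕ) (C : Matrix (Fin n) (Fin n) F) (a : F) (i j : Fin n) :
    (C * nMat n a) i j =
      if h : 0 < (j : ℕ) then
        C i ⟨(j : ℕ) - 1, by omega⟩ * (if (j : ℕ) = 1 then a else 1)
      else 0 := by
  rw [Matrix.mul_apply]
  by_cases h : 0 < (j : ℕ)
  · rw [dif_pos h, Finset.sum_eq_single ⟨(j : ℕ) - 1, by omega⟩]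
    · simp only [nMat, Fin.val_mk]
      rw [if_pos (by omega)]
      congr 1
      split_ifs <;> first | rfl | omega
    · intro b _ hb
      have : ¬ (j : ℕ) = (b : ℕ) + 1 := by
        intro hh
        exact hb (Fin.ext (by simp [hh]))
      rw [nMat, if_neg this, mul_zero]
    · exact fun hme => absurd (Finset.mem_univ _) hme
  · rw [dif_neg h]
    apply Finset.sum_eq_zero
    intro b _
    rw [nMat, if_neg (by omega), mul_zero]

lemma nMat_mul (n : ℕ) (C : Matrix (Fin n) (Fin n) F) (a : F) (i j : Fin n) :
    (nMat n a * C) i j =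
      if h : (i : ℕ) + 1 < n then
        (if (i : ℕ) = 0 then a else 1) * C ⟨(i : ℕ) + 1, h⟩ j
      else 0 := by
  rw [Matrix.mul_apply]
  by_cases h : (i : ℕ) + 1 < n
  · rw [dif_pos h, Finset.sum_eq_single ⟨(i : ℕ) + 1, h⟩]
    · rw [nMat, if_pos (by simp)]
    · intro b _ hb
      have : ¬ (b : ℕ) = (i : ℕ) + 1 := by
        intro hh
        exact hb (Fin.ext (by simpa using hh))
      rw [nMat, if_neg this, zero_mul]
    · exact fun hme => absurd (Finset.mem_univ _) hme
  · rw [dif_neg h]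
    apply Finset.sum_eq_zero
    intro b _
    have := b.isLt
    rw [nMat, if_neg (by omega), zero_mul]

lemma part1_forward (m : ℕ) (a b : F) (ha : a ≠ 0) (hb : b ≠ 0)
    (C : Matrix (Fin (m + 2)) (Fin (m + 2)) F) (hdet : C.det = 1)
    (hC : C * rMat (m + 2) a = rMat (m + 2) b * C) :
    ∃ θ : F, θ ≠ 0 ∧ b = θ ^ (m + 2) * a := by
  have hN : C * nMat (m + 2) a = nMat (m + 2) b * C := by
    have h := hC
    rw [rMat_eq, rMat_eq, mul_add, add_mul, mul_one, one_mul] at h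
    exact add_left_cancel h
  have rel : ∀ i j : Fin (m + 2), (C * nMat (m + 2) a) i j = (nMat (m + 2) b * C) i j :=
    fun i j => by rw [hN]
  have relzero : ∀ (iv : ℕ) (hi : iv + 1 < m + 2), C ⟨iv + 1, hi⟩ ⟨0, by omega⟩ = 0 := by
    intro iv hi
    have h := rel ⟨iv, by omega⟩ ⟨0, by omega⟩
    rw [mul_nMat, nMat_mul, dif_neg (by simp), dif_pos (by simpa using hi)] at h
    rcases mul_eq_zero.mp h.symm with h' | h'
    · exfalso
      revert h'
      split_ifs <;> simp [hb]
    · exact h'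
  have rellast : ∀ (jv : ℕ) (hj : jv + 1 < m + 2),
      C ⟨m + 1, by omega⟩ ⟨jv, by omega⟩ = 0 := by
    intro jv hj
    have h := rel ⟨m + 1, by omega⟩ ⟨jv + 1, by omega⟩
    rw [mul_nMat, nMat_mul, dif_pos (by simp), dif_neg (by simp)] at h
    rcases mul_eq_zero.mp h with h' | h'
    · rw [← h']
      exact Cext C rfl ((by omega : (jv : ℕ) = jv + 1 - 1))
    · exfalso
      revert h'
      split_ifs <;> simp [ha]
  have rel' : ∀ (iv jv : ℕ) (hi : iv + 1 < m + 2) (hj : jv + 1 < m + 2),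
      C ⟨iv, by omega⟩ ⟨jv, by omega⟩ * (if jv = 0 then a else 1) =
        (if iv = 0 then b else 1) * C ⟨iv + 1, hi⟩ ⟨jv + 1, hj⟩ := by
    intro iv jv hi hj
    have h := rel ⟨iv, by omega⟩ ⟨jv + 1, hj⟩
    rw [mul_nMat, nMat_mul, dif_pos (by simp), dif_pos (by simpa using hi)] at h
    simp only [Fin.val_mk] at h
    rw [← h]
    have e1 : C ⟨iv, by omega⟩ ⟨jv, by omega⟩ = C ⟨iv, by omega⟩ ⟨jv + 1 - 1, by omega⟩ :=
      Cext C rfl ((by omega : (jv : ℕ) = jv + 1 - 1))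
    rw [e1]
    congr 1
    split_ifs <;> first | rfl | omega
  have htri : ∀ (jv : ℕ) (i j : Fin (m + 2)), (j : ℕ) = jv → (j : ℕ) < (i : ℕ) → C i j = 0 := by
    intro jv
    induction jv using Nat.strong_induction_on with
    | _ jv ih =>
      intro i j hjv hlt
      have hiv := i.isLt
      have hi' : ((i : ℕ) - 1) + 1 < m + 2 := by omega
      rcases Nat.eq_zero_or_pos jv with h0 | hpos
      · have h2 : C ⟨(i : ℕ) - 1 + 1, hi'⟩ ⟨0, by omega⟩ = 0 := relzero _ _
        rw [← h2]
        exact Cext C ((by omega : (i : ℕ) = (i : ℕ) - 1 + 1)) ((by omega : (j : ℕ) = 0))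
      · have h := rel' ((i : ℕ) - 1) (jv - 1) hi' (by omega)
        have hz : C ⟨(i : ℕ) - 1, by omega⟩ ⟨jv - 1, by omega⟩ = 0 :=
          ih (jv - 1) (by omega) _ _ (by simp) (by simp; omega)
        rw [hz, zero_mul] at h
        rcases mul_eq_zero.mp h.symm with h' | h'
        · exfalso
          revert h'
          split_ifs <;> simp [hb]
        · rw [← h']
          exact Cext C ((by omega : (i : ℕ) = (i : ℕ) - 1 + 1)) ((by omega : (j : ℕ) = jv - 1 + 1))
  have hdiag : ∀ (iv : ℕ) (h : iv < m + 2), 0 < iv →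
      C ⟨iv, h⟩ ⟨iv, h⟩ = C ⟨0, by omega⟩ ⟨0, by omega⟩ * a * b⁻¹ := by
    intro iv
    induction iv with
    | zero => intro h h0; omega
    | succ iv ih =>
      intro h _
      rcases Nat.eq_zero_or_pos iv with h0 | hpos
      · subst h0
        have hr := rel' 0 0 (by omega) (by omega)
        rw [if_pos rfl, if_pos rfl] at hr
        rw [hr, mul_comm b, mul_assoc, mul_inv_cancel₀ hb, mul_one]
      · have hr := rel' iv iv (by omega) (by omega)
        rw [if_neg (by omega), if_neg (by omega), mul_one, one_mul] at hr
        have := ih (by omega) hpos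
        rw [← hr] at *
        exact this
  have hBT : C.BlockTriangular id := fun i j hij => htri (j : ℕ) i j rfl hij
  have hdet2 : ∏ i : Fin (m + 2), C i i = 1 := by
    rw [← Matrix.det_of_upperTriangular hBT]; exact hdet
  set t := C ⟨0, by omega⟩ ⟨0, by omega⟩ with ht
  have h0mem : (⟨0, by omega⟩ : Fin (m + 2)) ∈ Finset.univ := Finset.mem_univ _
  have hprod : ∏ i : Fin (m + 2), C i i = t * (t * a * b⁻¹) ^ (m + 1) := by
    rw [← Finset.mul_prod_erase Finset.univ (fun i => C i i) h0mem]
    congr 1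
    have hcongr : ∀ i ∈ Finset.univ.erase (⟨0, by omega⟩ : Fin (m + 2)),
        C i i = t * a * b⁻¹ := by
      intro i hi
      have hne : i ≠ ⟨0, by omega⟩ := (Finset.mem_erase.mp hi).1
      have hpos : 0 < (i : ℕ) := by
        rcases Nat.eq_zero_or_pos (i : ℕ) with h0 | h0
        · exact absurd (Fin.ext h0) hne
        · exact h0
      have hd := hdiag (i : ℕ) i.isLt hpos
      exact (Cext C rfl rfl).trans hd
    rw [Finset.prod_congr rfl hcongr, Finset.prod_const, Finset.card_erase_of_mem h0mem,
      Finset.card_univ, Fintype.card_fin]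
    norm_num
  have hkey : t * (t * a * b⁻¹) ^ (m + 1) = 1 := by rw [← hprod]; exact hdet2
  have htne : t ≠ 0 := by
    intro h0
    rw [h0, zero_mul] at hkey
    exact zero_ne_one hkey
  have hkey2 : t * (t * a) ^ (m + 1) = b ^ (m + 1) := by
    field_simp at hkey
    rw [div_pow, mul_div_assoc', div_eq_one_iff_eq (pow_ne_zero _ hb)] at hkey
    linear_combination hkey
  refine ⟨b * a⁻¹ * t⁻¹,
    mul_ne_zero (mul_ne_zero hb (inv_ne_zero ha)) (inv_ne_zero htne), ?_⟩
  field_simp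
  rw [div_pow, mul_div_assoc', eq_div_iff (pow_ne_zero _ (mul_ne_zero ha htne))]
  linear_combination (a * b) * hkey2

lemma part1_backward (m : ℕ) (a θ : F) (ha : a ≠ 0) (hθ : θ ≠ 0) :
    ∃ C : Matrix (Fin (m + 2)) (Fin (m + 2)) F, C.det = 1 ∧
      C * rMat (m + 2) a = rMat (m + 2) (θ ^ (m + 2) * a) * C := by
  refine ⟨Matrix.diagonal (fun i => if (i : ℕ) = 0 then θ ^ (m + 1) else θ⁻¹), ?_, ?_⟩
  · rw [Matrix.det_diagonal]
    have h0mem : (⟨0, by omega⟩ : Fin (m + 2)) ∈ Finset.univ := Finset.mem_univ _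
    rw [← Finset.mul_prod_erase Finset.univ _ h0mem]
    have hcongr : ∀ i ∈ Finset.univ.erase (⟨0, by omega⟩ : Fin (m + 2)),
        (if (i : ℕ) = 0 then θ ^ (m + 1) else θ⁻¹) = θ⁻¹ := by
      intro i hi
      rw [if_neg]
      intro h0
      exact (Finset.mem_erase.mp hi).1 (Fin.ext h0)
    rw [Finset.prod_congr rfl hcongr, Finset.prod_const, Finset.card_erase_of_mem h0mem,
      Finset.card_univ, Fintype.card_fin, if_pos rfl]
    norm_num
    exact mul_inv_cancel₀ (pow_ne_zero _ hθ)
  · ext i j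
    rw [Matrix.diagonal_mul, Matrix.mul_diagonal]
    simp only [rMat]
    by_cases h1 : (j : ℕ) = (i : ℕ)
    · rw [if_pos h1, if_pos h1, mul_one, one_mul, h1]
    · rw [if_neg h1, if_neg h1]
      by_cases h2 : (j : ℕ) = (i : ℕ) + 1
      · rw [if_pos h2, if_pos h2]
        have hj0 : ¬ (j : ℕ) = 0 := by omega
        rw [if_neg hj0]
        by_cases h3 : (i : ℕ) = 0
        · simp only [if_pos h3]
          field_simp
          ring
        · simp only [if_neg h3, if_neg hj0, mul_one, one_mul]
      · rw [if_neg h2, if_neg h2, mul_zero, zero_mul]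

lemma conj_to_rMat (m : ℕ) (M : Matrix (Fin (m + 2)) (Fin (m + 2)) F)
    (hnil : (M - 1) ^ (m + 2) = 0) (hreg : (M - 1) ^ (m + 1) ≠ 0) :
    ∃ (d : F) (Q : Matrix (Fin (m + 2)) (Fin (m + 2)) F),
      d ≠ 0 ∧ Q.det = 1 ∧ M * Q = Q * rMat (m + 2) d := by
  -- find a cyclic vector
  have hex : ∃ i j, ((M - 1) ^ (m + 1)) i j ≠ 0 := by
    by_contra h
    push_neg at h
    exact hreg (by ext i j; simpa using h i j)
  obtain ⟨i0, j0, hij⟩ := hex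
  set v : Fin (m + 2) → F := Pi.single j0 1 with hv
  have hvreg : ((M - 1) ^ (m + 1)).mulVec v ≠ 0 := by
    intro h
    have := congrFun h i0
    rw [hv, Matrix.mulVec_single] at this
    simp only [MulOpposite.op_one, one_smul, Matrix.col_apply, mul_one, Pi.zero_apply] at this
    exact hij this
  -- the candidate basis
  have hzero : ∀ p q : ℕ, m + 2 ≤ p + q →
      ((M - 1) ^ p).mulVec (((M - 1) ^ q).mulVec v) = 0 := by
    intro p q hpq
    rw [Matrix.mulVec_mulVec, ← pow_add, pow_eq_zero_of_le hpq hnil, Matrix.zero_mulVec]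
  have hli : LinearIndependent F
      (fun i : Fin (m + 2) => ((M - 1) ^ (m + 1 - (i : ℕ))).mulVec v) := by
    rw [Fintype.linearIndependent_iff]
    intro c hc
    have main : ∀ (k : ℕ) (i : Fin (m + 2)), m + 1 - (i : ℕ) = k → c i = 0 := by
      intro k
      induction k using Nat.strong_induction_on with
      | _ k ih =>
        intro i hk
        have happ : ∑ i' : Fin (m + 2),
            c i' • (((M - 1) ^ ((i : ℕ))).mulVec
              (((M - 1) ^ (m + 1 - (i' : ℕ))).mulVec v)) = 0 := by
          have h2 := congrArg (((M - 1) ^ ((i : ℕ))).mulVecLin) hc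
          rw [map_sum, map_zero] at h2
          simpa [Matrix.mulVecLin_apply] using h2
        rw [Finset.sum_eq_single i] at happ
        · rw [Matrix.mulVec_mulVec, ← pow_add,
            (by omega : (i : ℕ) + (m + 1 - (i : ℕ)) = m + 1)] at happ
          rcases smul_eq_zero.mp happ with h | h
          · exact h
          · exact absurd h hvreg
        · intro b _ hbne
          have hbv : (b : ℕ) ≠ (i : ℕ) := fun hh => hbne (Fin.ext hh)
          rcases lt_or_gt_of_ne hbv with hlt | hgt
          · rw [hzero _ _ (by omega), smul_zero]
          · rw [ih (m + 1 - (b : ℕ)) (by omega) b rfl, zero_smul]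
        · exact fun hme => absurd (Finset.mem_univ _) hme
    exact fun i => main (m + 1 - (i : ℕ)) i rfl
  -- the change of basis matrix
  set P : Matrix (Fin (m + 2)) (Fin (m + 2)) F :=
    Matrix.of (fun i j : Fin (m + 2) => ((M - 1) ^ (m + 1 - (j : ℕ))).mulVec v i) with hP
  have hPunit : IsUnit P.det := by
    rw [← Matrix.isUnit_iff_isUnit_det]
    apply Matrix.linearIndependent_cols_iff_isUnit.mp
    have he : (fun j : Fin (m + 2) => P.transpose j) =
        (fun j : Fin (m + 2) => ((M - 1) ^ (m + 1 - (j : ℕ))).mulVec v) := by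
      funext j
      funext i
      rfl
    show LinearIndependent F (fun j : Fin (m + 2) => P.transpose j)
    rw [he]
    exact hli
  have hPdet : P.det ≠ 0 := by
    intro h
    rw [h] at hPunit
    exact (by simpa using hPunit : ¬ IsUnit (0 : F)) hPunit |>.elim
  -- N * P = P * J
  have hNP : (M - 1) * P = P * nMat (m + 2) (1 : F) := by
    ext i j
    rw [mul_nMat]
    have hL : ((M - 1) * P) i j = (((M - 1) ^ (1 + (m + 1 - (j : ℕ)))).mulVec v) i := by
      rw [pow_add, pow_one, ← Matrix.mulVec_mulVec, Matrix.mul_apply]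
      rfl
    rw [hL]
    by_cases h : 0 < (j : ℕ)
    · rw [dif_pos h, ite_self, mul_one,
        (by omega : 1 + (m + 1 - (j : ℕ)) = m + 1 - ((j : ℕ) - 1))]
      rfl
    · rw [dif_neg h, (by omega : 1 + (m + 1 - (j : ℕ)) = m + 2), hnil, Matrix.zero_mulVec]
      rfl
  -- rescale to make the determinant 1
  set D : Matrix (Fin (m + 2)) (Fin (m + 2)) F :=
    Matrix.diagonal (fun i => if (i : ℕ) = 0 then (P.det)⁻¹ else 1) with hD
  refine ⟨P.det, P * D, hPdet, ?_, ?_⟩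
  · rw [Matrix.det_mul, Matrix.det_diagonal]
    have h0mem : (⟨0, by omega⟩ : Fin (m + 2)) ∈ Finset.univ := Finset.mem_univ _
    rw [← Finset.mul_prod_erase Finset.univ _ h0mem]
    have hcongr : ∀ i ∈ Finset.univ.erase (⟨0, by omega⟩ : Fin (m + 2)),
        (if (i : ℕ) = 0 then (P.det)⁻¹ else 1) = 1 := by
      intro i hi
      rw [if_neg]
      intro h0
      exact (Finset.mem_erase.mp hi).1 (Fin.ext h0)
    rw [Finset.prod_congr rfl hcongr, Finset.prod_const, one_pow, mul_one, if_pos rfl,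
      mul_inv_cancel₀ hPdet]
  · have hJD : nMat (m + 2) (1 : F) * D = D * nMat (m + 2) P.det := by
      ext i j
      rw [Matrix.mul_diagonal, Matrix.diagonal_mul]
      simp only [nMat]
      by_cases h2 : (j : ℕ) = (i : ℕ) + 1
      · rw [if_pos h2, if_pos h2]
        have hj0 : ¬ (j : ℕ) = 0 := by omega
        rw [if_neg hj0]
        by_cases h3 : (i : ℕ) = 0
        · rw [if_pos h3, if_pos h3, if_pos h3, one_mul, inv_mul_cancel₀ hPdet]
        · rw [if_neg h3, if_neg h3, if_neg h3, one_mul]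
      · rw [if_neg h2, if_neg h2, zero_mul, mul_zero]
    have hNQ : (M - 1) * (P * D) = (P * D) * nMat (m + 2) P.det := by
      calc (M - 1) * (P * D) = ((M - 1) * P) * D := by rw [mul_assoc]
        _ = (P * nMat (m + 2) 1) * D := by rw [hNP]
        _ = P * (nMat (m + 2) 1 * D) := by rw [mul_assoc]
        _ = P * (D * nMat (m + 2) P.det) := by rw [hJD]
        _ = (P * D) * nMat (m + 2) P.det := by rw [mul_assoc]
    rw [sub_mul, one_mul] at hNQ
    rw [rMat_eq, mul_add, mul_one]
    rw [eq_add_of_sub_eq hNQ]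
    exact add_comm _ _

lemma card_ker_pow (G : Type*) [CommGroup G] [Fintype G] [IsCyclic G] (n : ℕ) (hn : 0 < n) :
    Nat.card ((powMonoidHom n : G →* G).ker) = Nat.gcd n (Fintype.card G) := by
  obtain ⟨g, hg⟩ := IsCyclic.exists_generator (α := G)
  set cm := Fintype.card G with hm
  have hmpos : 0 < cm := Fintype.card_pos
  set d := Nat.gcd n cm with hd
  have hdpos : 0 < d := Nat.gcd_pos_of_pos_left _ hn
  have hog : orderOf g = cm := by
    rw [orderOf_eq_card_of_forall_mem_zpowers hg, Nat.card_eq_fintype_card]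
  have hdm : d ∣ cm := Nat.gcd_dvd_right n cm
  have hdn : d ∣ n := Nat.gcd_dvd_left n cm
  have hker : (powMonoidHom n : G →* G).ker = Subgroup.zpowers (g ^ (cm / d)) := by
    ext x
    simp only [MonoidHom.mem_ker, powMonoidHom_apply]
    constructor
    · intro hx
      obtain ⟨k, hk0⟩ := mem_powers_iff_mem_zpowers.mpr (hg x)
      have hk : g ^ k = x := hk0
      have hgkn : g ^ (k * n) = 1 := by rw [pow_mul, hk, hx]
      have hdvd : cm ∣ k * n := by rw [← hog]; exact orderOf_dvd_of_pow_eq_one hgkn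
      obtain ⟨t, ht⟩ := hdvd
      have h1 : k * (n / d) = (cm / d) * t := by
        apply Nat.eq_of_mul_eq_mul_left hdpos
        calc d * (k * (n / d)) = k * (d * (n / d)) := by ring
          _ = k * n := by rw [Nat.mul_div_cancel' hdn]
          _ = cm * t := ht
          _ = (d * (cm / d)) * t := by rw [Nat.mul_div_cancel' hdm]
          _ = d * ((cm / d) * t) := by ring
      have hcop : Nat.Coprime (cm / d) (n / d) := by
        have hgc : Nat.gcd cm n = d := by rw [Nat.gcd_comm]
        have := Nat.coprime_div_gcd_div_gcd (m := cm) (n := n) (by rw [hgc]; exact hdpos)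
        rwa [hgc] at this
      have hkey : (cm / d) ∣ k := hcop.dvd_of_dvd_mul_right ⟨t, h1⟩
      obtain ⟨s, hs⟩ := hkey
      exact Subgroup.mem_zpowers_iff.mpr
        ⟨(s : ℤ), by rw [zpow_natCast, ← pow_mul, ← hs, hk]⟩
    · intro hx
      obtain ⟨t, ht⟩ := Subgroup.mem_zpowers_iff.mp hx
      have h2 : (cm / d) * n = cm * (n / d) := by
        apply Nat.eq_of_mul_eq_mul_left hdpos
        calc d * ((cm / d) * n) = (d * (cm / d)) * n := by ring
          _ = cm * n := by rw [Nat.mul_div_cancel' hdm]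
          _ = (d * (n / d)) * cm := by rw [Nat.mul_div_cancel' hdn]; ring
          _ = d * (cm * (n / d)) := by ring
      have h1 : (g ^ (cm / d)) ^ n = 1 := by
        rw [← pow_mul]
        exact orderOf_dvd_iff_pow_eq_one.mp (by rw [hog]; exact ⟨n / d, h2⟩)
      rw [← ht]
      calc ((g ^ (cm / d)) ^ t) ^ n = ((g ^ (cm / d)) ^ n) ^ t := by
            rw [← zpow_natCast ((g ^ (cm / d)) ^ t), ← zpow_mul, mul_comm, zpow_mul,
              zpow_natCast]
        _ = 1 := by rw [h1, one_zpow]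
  rw [hker, Nat.card_zpowers, orderOf_pow, hog, Nat.gcd_comm cm (cm / d),
    Nat.gcd_eq_left (Nat.div_dvd_of_dvd hdm), Nat.div_div_self hdm hmpos.ne']

end Stmt8

set_option maxHeartbeats 1000000 in
/-- `r_a` and `r_b` are conjugate in `SL_n(q)` iff `b = θⁿ a` for some
`θ ∈ F_q^×`; consequently the number of regular unipotent conjugacy classes of
`SL_n(q)` is `gcd(n, q − 1)`. -/
theorem stmt8 {F : Type*} [Field F] [Fintype F] (n : ℕ) (hn : 2 ≤ n) :
    (∀ a b : Fˣ,
      ((∃ C : Matrix (Fin n) (Fin n) F, C.det = 1 ∧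
          C * rMat n (a : F) = rMat n (b : F) * C) ↔
        ∃ θ : Fˣ, (b : F) = (θ : F) ^ n * (a : F))) ∧
    Nat.card {c : ConjClasses (Matrix.SpecialLinearGroup (Fin n) F) |
        ∃ g ∈ c.carrier,
          ((g : Matrix (Fin n) (Fin n) F) - 1) ^ n = 0 ∧
          ((g : Matrix (Fin n) (Fin n) F) - 1) ^ (n - 1) ≠ 0} =
      Nat.gcd n (Fintype.card F - 1) := by
  classical
  obtain ⟨m, rfl⟩ : ∃ m, n = m + 2 := ⟨n - 2, by omega⟩
  -- Part 1 as an iff for units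
  have part1 : ∀ a b : Fˣ,
      ((∃ C : Matrix (Fin (m + 2)) (Fin (m + 2)) F, C.det = 1 ∧
          C * rMat (m + 2) (a : F) = rMat (m + 2) (b : F) * C) ↔
        ∃ θ : Fˣ, (b : F) = (θ : F) ^ (m + 2) * (a : F)) := by
    intro a b
    constructor
    · rintro ⟨C, hC1, hC2⟩
      obtain ⟨θ, hθ, hb⟩ := Stmt8.part1_forward m (a : F) (b : F) a.ne_zero b.ne_zero C hC1 hC2
      exact ⟨Units.mk0 θ hθ, by simpa using hb⟩
    · rintro ⟨θ, hb⟩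
      obtain ⟨C, h1, h2⟩ := Stmt8.part1_backward m (a : F) (θ : F) a.ne_zero θ.ne_zero
      exact ⟨C, h1, by rwa [← hb] at h2⟩
  refine ⟨part1, ?_⟩
  -- Part 2: counting the regular unipotent classes
  let rSL : Fˣ → Matrix.SpecialLinearGroup (Fin (m + 2)) F := fun u => ⟨rMat (m + 2) (u : F), Stmt8.rMat_det _ _⟩
  let φ : Fˣ → ConjClasses (Matrix.SpecialLinearGroup (Fin (m + 2)) F) := fun u => ConjClasses.mk (rSL u)
  set S := {c : ConjClasses (Matrix.SpecialLinearGroup (Fin (m + 2)) F) |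
      ∃ g ∈ c.carrier,
        ((g : Matrix (Fin (m + 2)) (Fin (m + 2)) F) - 1) ^ (m + 2) = 0 ∧
        ((g : Matrix (Fin (m + 2)) (Fin (m + 2)) F) - 1) ^ (m + 2 - 1) ≠ 0} with hS
  -- the φ u land in S
  have hsub : ∀ u : Fˣ, (rSL u : Matrix (Fin (m + 2)) (Fin (m + 2)) F) - 1 =
      Stmt8.nMat (m + 2) (u : F) := by
    intro u
    show rMat (m + 2) (u : F) - 1 = Stmt8.nMat (m + 2) (u : F)
    rw [Stmt8.rMat_eq, add_sub_cancel_left]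
  have hmem : ∀ u : Fˣ, φ u ∈ S := by
    intro u
    refine ⟨rSL u, ConjClasses.mem_carrier_iff_mk_eq.mpr rfl, ?_, ?_⟩
    · rw [hsub u]
      exact Stmt8.nMat_pow_n (m + 2) (u : F)
    · rw [hsub u]
      exact Stmt8.nMat_pow_pred (m + 2) (by omega) (u : F) u.ne_zero
  -- surjectivity onto S
  have hsurj : ∀ c ∈ S, ∃ u : Fˣ, φ u = c := by
    intro c hc
    obtain ⟨g, hgc, hnil, hreg⟩ := hc
    obtain ⟨d, Q, hd, hQdet, hMQ⟩ := Stmt8.conj_to_rMat m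
      (g : Matrix (Fin (m + 2)) (Fin (m + 2)) F) hnil hreg
    refine ⟨Units.mk0 d hd, ?_⟩
    have hconj : IsConj (rSL (Units.mk0 d hd)) g := by
      let QS : Matrix.SpecialLinearGroup (Fin (m + 2)) F := ⟨Q, hQdet⟩
      have hsemi : QS * rSL (Units.mk0 d hd) = g * QS := Subtype.ext hMQ.symm
      exact ⟨toUnits QS, hsemi⟩
    exact (ConjClasses.mk_eq_mk_iff_isConj.mpr hconj).trans
      (ConjClasses.mem_carrier_iff_mk_eq.mp hgc)
  -- conjugacy of the rSL's
  have hiff : ∀ u w : Fˣ, φ u = φ w ↔ ∃ θ : Fˣ, w = θ ^ (m + 2) * u := by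
    intro u w
    rw [ConjClasses.mk_eq_mk_iff_isConj]
    constructor
    · rintro ⟨cu, hcu⟩
      have h1 : ((cu : Matrix.SpecialLinearGroup (Fin (m + 2)) F) : Matrix (Fin (m + 2)) (Fin (m + 2)) F) * rMat (m + 2) (u : F) =
          rMat (m + 2) (w : F) * ((cu : Matrix.SpecialLinearGroup (Fin (m + 2)) F) : Matrix (Fin (m + 2)) (Fin (m + 2)) F) :=
        congrArg Subtype.val hcu
      have h2 := (part1 u w).mp ⟨_, Matrix.SpecialLinearGroup.det_coe _, h1⟩
      obtain ⟨θ, hθ⟩ := h2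
      refine ⟨θ, Units.ext ?_⟩
      push_cast
      exact hθ
    · rintro ⟨θ, hw⟩
      have h2 := (part1 u w).mpr ⟨θ, by rw [hw]; push_cast; ring⟩
      obtain ⟨C, hC1, hC2⟩ := h2
      refine ⟨toUnits (⟨C, hC1⟩ : Matrix.SpecialLinearGroup (Fin (m + 2)) F), ?_⟩
      apply Subtype.ext
      exact hC2
  -- pass to the quotient by n-th powers
  set H := MonoidHom.range (powMonoidHom (m + 2) : Fˣ →* Fˣ) with hH
  have key : ∀ u w : Fˣ, φ u = φ w ↔ (QuotientGroup.mk u : Fˣ ⧸ H) = QuotientGroup.mk w := by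
    intro u w
    rw [hiff, QuotientGroup.eq]
    constructor
    · rintro ⟨θ, hw⟩
      exact ⟨θ, by rw [powMonoidHom_apply, hw, mul_comm (θ ^ (m + 2)) u, inv_mul_cancel_left]⟩
    · rintro ⟨θ, hθ⟩
      rw [powMonoidHom_apply] at hθ
      refine ⟨θ, ?_⟩
      rw [hθ, mul_comm u⁻¹ w, mul_assoc, inv_mul_cancel, mul_one]
  let Φ : Fˣ ⧸ H → {c // c ∈ S} := Quotient.lift (fun u => (⟨φ u, hmem u⟩ : {c // c ∈ S}))
    (by
      intro u w huw
      have : (QuotientGroup.mk u : Fˣ ⧸ H) = QuotientGroup.mk w := Quotient.sound huw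
      exact Subtype.ext ((key u w).mpr this))
  have hbij : Function.Bijective Φ := by
    constructor
    · intro x y
      induction x using Quotient.inductionOn with
      | h u =>
        induction y using Quotient.inductionOn with
        | h w =>
          intro hxy
          exact (key u w).mp (congrArg Subtype.val hxy)
    · rintro ⟨c, hc⟩
      obtain ⟨u, hu⟩ := hsurj c hc
      exact ⟨QuotientGroup.mk u, Subtype.ext hu⟩
  have hcard1 : Nat.card S = Nat.card (Fˣ ⧸ H) :=
    (Nat.card_congr (Equiv.ofBijective Φ hbij)).symm
  -- cardinality of the quotient equals the cardinality of the kernel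
  have eqv := QuotientGroup.quotientKerEquivRange (powMonoidHom (m + 2) : Fˣ →* Fˣ)
  have e3 := Nat.card_congr eqv.toEquiv
  have e1 : Nat.card Fˣ = Nat.card (Fˣ ⧸ H) * Nat.card H :=
    Subgroup.card_eq_card_quotient_mul_card_subgroup H
  have e2 : Nat.card Fˣ =
      Nat.card (Fˣ ⧸ MonoidHom.ker (powMonoidHom (m + 2) : Fˣ →* Fˣ)) *
        Nat.card (MonoidHom.ker (powMonoidHom (m + 2) : Fˣ →* Fˣ)) :=
    Subgroup.card_eq_card_quotient_mul_card_subgroup _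
  have hHpos : 0 < Nat.card H := Nat.card_pos
  have e4 : Nat.card (Fˣ ⧸ H) = Nat.card (MonoidHom.ker (powMonoidHom (m + 2) : Fˣ →* Fˣ)) := by
    apply Nat.eq_of_mul_eq_mul_right hHpos
    calc Nat.card (Fˣ ⧸ H) * Nat.card H = Nat.card Fˣ := e1.symm
      _ = Nat.card (Fˣ ⧸ MonoidHom.ker (powMonoidHom (m + 2) : Fˣ →* Fˣ)) *
            Nat.card (MonoidHom.ker (powMonoidHom (m + 2) : Fˣ →* Fˣ)) := e2
      _ = Nat.card H *
            Nat.card (MonoidHom.ker (powMonoidHom (m + 2) : Fˣ →* Fˣ)) := by rw [e3]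
      _ = Nat.card (MonoidHom.ker (powMonoidHom (m + 2) : Fˣ →* Fˣ)) * Nat.card H :=
            mul_comm _ _
  rw [hcard1, e4, Stmt8.card_ker_pow Fˣ (m + 2) (by omega), Fintype.card_units]
end

section
/- Let q be a prime power, n ≥ 2, and let x ∈ SL_n(q) be a regular unipotent upper-triangular matrix with superdiagonal entries x_{12}, x_{23}, …, x_{n−1,n} ∈ F_q^×. Then x is conjugate in SL_n(q) to r_a (the matrix with superdiagonal (a,1,…,1)) if and only if θⁿ a = x_{12} · x_{23}² · x_{34}³ ⋯ x_{n−1,n}^{n−1} for some θ ∈ F_q^×. -/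
open Finset Matrix

section aux
variable {F : Type*} [Field F] {n : ℕ}

lemma powN_lt (N : Matrix (Fin n) (Fin n) F)
    (hNlow : ∀ i j : Fin n, (j : ℕ) ≤ (i : ℕ) → N i j = 0) :
    ∀ p : ℕ, ∀ i j : Fin n, (j : ℕ) < (i : ℕ) + p → (N ^ p) i j = 0 := by
  intro p
  induction p with
  | zero =>
    intro i j h
    have : i ≠ j := by intro e; subst e; omega
    simp only [pow_zero, Matrix.one_apply, if_neg this]
  | succ p ih =>
    intro i j h
    rw [pow_succ', Matrix.mul_apply]
    apply Finset.sum_eq_zero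
    intro k _
    by_cases hk : (k : ℕ) ≤ (i : ℕ)
    · rw [hNlow i k hk, zero_mul]
    · rw [ih k j (by omega), mul_zero]

lemma powN_eq (N : Matrix (Fin n) (Fin n) F) (u : ℕ → F)
    (hNlow : ∀ i j : Fin n, (j : ℕ) ≤ (i : ℕ) → N i j = 0)
    (hNsup : ∀ i j : Fin n, (j : ℕ) = (i : ℕ) + 1 → N i j = u (i : ℕ)) :
    ∀ p : ℕ, ∀ i j : Fin n, (j : ℕ) = (i : ℕ) + p →
      (N ^ p) i j = ∏ m ∈ Finset.Ico (i : ℕ) ((i : ℕ) + p), u m := by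
  intro p
  induction p with
  | zero =>
    intro i j h
    have : i = j := Fin.ext (by omega)
    subst this
    simp
  | succ p ih =>
    intro i j h
    have hi1 : (i : ℕ) + 1 < n := by omega
    set k0 : Fin n := ⟨(i : ℕ) + 1, hi1⟩ with hk0
    have hk0v : (k0 : ℕ) = (i : ℕ) + 1 := rfl
    rw [pow_succ', Matrix.mul_apply]
    rw [Finset.sum_eq_single k0]
    · have e1 : ∏ m ∈ Finset.Ico (i:ℕ) ((i:ℕ)+(p+1)), u m
          = u i * ∏ m ∈ Finset.Ico ((i:ℕ)+1) ((i:ℕ)+1+p), u m := by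
        rw [show (i:ℕ)+(p+1) = (i:ℕ)+1+p by ring,
          Finset.prod_eq_prod_Ico_succ_bot (by omega) u]
      rw [hNsup i k0 hk0v, ih k0 j (by simp only [hk0v]; omega), hk0v, e1]
    · intro k _ hk
      by_cases hki : (k : ℕ) ≤ (i : ℕ)
      · rw [hNlow i k hki, zero_mul]
      · have hik : (i : ℕ) + 1 < (k : ℕ) := by
          rcases Nat.lt_or_ge ((i:ℕ)+1) (k:ℕ) with h'|h'
          · exact h'
          · exact absurd (Fin.ext (show (k:ℕ) = (k0:ℕ) by omega)) hk
        rw [powN_lt N hNlow p k j (by omega), mul_zero]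
    · intro h'; exact absurd (Finset.mem_univ _) h'

lemma double_prod (n : ℕ) (u : ℕ → F) :
    ∏ j ∈ Finset.range n, ∏ m ∈ Finset.Ico j (n - 1), u m =
      ∏ m ∈ Finset.range (n - 1), u m ^ (m + 1) := by
  rw [Finset.prod_comm' (t' := Finset.range (n-1)) (s' := fun m => Finset.range (m+1))
    (by intro j m; simp only [Finset.mem_range, Finset.mem_Ico]; omega)]
  simp [Finset.prod_const]

lemma mulE (a : F) (C : Matrix (Fin n) (Fin n) F) (i j : Fin n) :
    (C * (rMat n a - 1)) i j =
      if h : (j : ℕ) = 0 then 0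
      else (if (j : ℕ) = 1 then a else 1) * C i ⟨(j : ℕ) - 1, by omega⟩ := by
  rw [Matrix.mul_apply]
  split
  next h =>
    apply Finset.sum_eq_zero
    intro k _
    have hE : (rMat n a - 1) k j = 0 := by
      simp only [Matrix.sub_apply, Matrix.one_apply, rMat]
      by_cases hkj : k = j
      · subst hkj; simp
      · have h1 : ¬(j : ℕ) = (k : ℕ) := fun e => hkj (Fin.ext e.symm)
        rw [if_neg h1, if_neg (by omega), if_neg hkj, sub_zero]
    rw [hE, mul_zero]
  next h =>
    have hj1 : (j : ℕ) - 1 < n := by omega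
    rw [Finset.sum_eq_single (⟨(j : ℕ) - 1, hj1⟩ : Fin n)]
    · have hne : (⟨(j : ℕ) - 1, hj1⟩ : Fin n) ≠ j := by
        intro e
        have := congrArg Fin.val e
        simp only [Fin.val_mk] at this
        omega
      simp only [Matrix.sub_apply, Matrix.one_apply, rMat]
      rw [if_neg (show ¬(j : ℕ) = (((⟨(j:ℕ)-1, hj1⟩ : Fin n)) : ℕ) by
            simp only [Fin.val_mk]; omega),
          if_pos (show (j : ℕ) = (((⟨(j:ℕ)-1, hj1⟩ : Fin n)) : ℕ) + 1 by
            simp only [Fin.val_mk]; omega),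
          if_neg hne, sub_zero, mul_comm]
      congr 1
      split_ifs with h1 h2 h2 <;> first | rfl | (exfalso; omega)
    · intro k _ hk
      have hE : (rMat n a - 1) k j = 0 := by
        simp only [Matrix.sub_apply, Matrix.one_apply, rMat]
        by_cases hkj : k = j
        · subst hkj; simp
        · have h1 : ¬(j : ℕ) = (k : ℕ) := fun e => hkj (Fin.ext e.symm)
          have h2 : ¬(j : ℕ) = (k : ℕ) + 1 := by
            intro e
            exact hk (Fin.ext (by simp only [Fin.val_mk]; omega))
          rw [if_neg h1, if_neg h2, if_neg hkj, sub_zero]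
      rw [hE, mul_zero]
    · intro h'; exact absurd (Finset.mem_univ _) h'

lemma prod_fin_eq (n : ℕ) (f : Fin n → F) (g : ℕ → F) (hg : ∀ i : Fin n, f i = g (i : ℕ)) :
    ∏ i : Fin n, f i = ∏ m ∈ Finset.range n, g m := by
  rw [← Fin.prod_univ_eq_prod_range g n]
  exact Finset.prod_congr rfl fun i _ => hg i

lemma prod_range_split (n : ℕ) (hn : 1 ≤ n) (g : ℕ → F) :
    ∏ m ∈ Finset.range n, g m = g 0 * ∏ m ∈ Finset.Ico 1 n, g m := by
  rw [Finset.range_eq_Ico, Finset.prod_eq_prod_Ico_succ_bot hn]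

end aux

/-- Let `x ∈ SL_n(q)` be upper triangular with `1`s on the diagonal and nonzero
superdiagonal entries (hence regular unipotent).  Then `x` is conjugate in
`SL_n(q)` to `r_a` iff `θⁿ a = x₁₂ · x₂₃² ⋯ x_{n−1,n}^{n−1}` for some
`θ ∈ F_q^×`. -/
theorem stmt9 {F : Type*} [Field F] [Fintype F] (n : ℕ) (hn : 2 ≤ n)
    (x : Matrix (Fin n) (Fin n) F)
    (hdiag : ∀ i, x i i = 1)
    (hlow : ∀ i j : Fin n, (j : ℕ) < (i : ℕ) → x i j = 0)
    (hsup : ∀ i j : Fin n, (j : ℕ) = (i : ℕ) + 1 → x i j ≠ 0)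
    (a : F) :
    (∃ C : Matrix (Fin n) (Fin n) F, C.det = 1 ∧ C * rMat n a = x * C) ↔
      ∃ θ : Fˣ, (θ : F) ^ n * a =
        ∏ i : Fin (n - 1),
          x ⟨(i : ℕ), by omega⟩ ⟨(i : ℕ) + 1, by omega⟩ ^ ((i : ℕ) + 1) := by
  -- the superdiagonal, as a function on ℕ
  set u : ℕ → F := fun m => if h : m + 1 < n then x ⟨m, by omega⟩ ⟨m + 1, h⟩ else 1 with hu
  have hu_ne : ∀ m, u m ≠ 0 := by
    intro m
    by_cases h : m + 1 < n
    · simp only [hu, dif_pos h]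
      exact hsup _ _ rfl
    · simp only [hu, dif_neg h]
      exact one_ne_zero
  set N : Matrix (Fin n) (Fin n) F := x - 1 with hNdef
  have hNlow : ∀ i j : Fin n, (j : ℕ) ≤ (i : ℕ) → N i j = 0 := by
    intro i j hij
    by_cases hij' : i = j
    · subst hij'
      simp [hNdef, Matrix.sub_apply, hdiag]
    · have hjlt : (j : ℕ) < (i : ℕ) := by
        rcases Nat.lt_or_ge (j:ℕ) (i:ℕ) with h' | h'
        · exact h'
        · exact absurd (Fin.ext (by omega)) hij'
      rw [hNdef, Matrix.sub_apply, Matrix.one_apply, if_neg hij', hlow i j hjlt, sub_zero]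
  have hNsup : ∀ i j : Fin n, (j : ℕ) = (i : ℕ) + 1 → N i j = u (i : ℕ) := by
    intro i j hij
    have h1 : (i : ℕ) + 1 < n := by omega
    have hne : i ≠ j := by intro e; subst e; omega
    rw [hNdef, Matrix.sub_apply, Matrix.one_apply, if_neg hne, sub_zero]
    simp only [hu, dif_pos h1]
    congr 1 <;> exact Fin.ext (by simp only [Fin.val_mk]; omega)
  have hRHS : (∏ i : Fin (n - 1),
      x ⟨(i : ℕ), by omega⟩ ⟨(i : ℕ) + 1, by omega⟩ ^ ((i : ℕ) + 1)) =
      ∏ m ∈ Finset.range (n - 1), u m ^ (m + 1) := by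
    rw [← Fin.prod_univ_eq_prod_range (fun m => u m ^ (m + 1)) (n - 1)]
    apply Finset.prod_congr rfl
    intro i _
    have h2 : (i : ℕ) + 1 < n := by omega
    simp only [hu, dif_pos h2]
  rw [hRHS]
  set lastI : Fin n := ⟨n - 1, by omega⟩ with hlastI
  have hlastIv : (lastI : ℕ) = n - 1 := rfl
  constructor
  · rintro ⟨C, hdet, hC⟩
    -- the column recursion
    have hCE : C * (rMat n a - 1) = N * C := by
      rw [Matrix.mul_sub, Matrix.mul_one, hNdef, Matrix.sub_mul, Matrix.one_mul, hC]
    have hcol : ∀ (i j j' : Fin n), (j : ℕ) = (j' : ℕ) + 1 →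
        (if (j : ℕ) = 1 then a else 1) * C i j' = (N * C) i j := by
      intro i j j' hjj
      have h := congrFun (congrFun hCE i) j
      rw [mulE, dif_neg (by omega)] at h
      have he : (⟨(j : ℕ) - 1, by omega⟩ : Fin n) = j' := Fin.ext (by
        simp only [Fin.val_mk]; omega)
      rw [he] at h
      exact h
    have hcol0 : ∀ i : Fin n, (N * C) i ⟨0, by omega⟩ = 0 := by
      intro i
      have h := congrFun (congrFun hCE i) ⟨0, by omega⟩
      rw [mulE, dif_pos rfl] at h
      exact h.symm
    -- every column (except column 0) comes from the last one
    have hrep : ∀ p : ℕ, p ≤ n - 2 →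
        ∀ i : Fin n, C i ⟨n - 1 - p, by omega⟩ = ((N ^ p) * C) i lastI := by
      intro p
      induction p with
      | zero => intro _ i; simp [hlastI]
      | succ p ih =>
        intro hp i
        have h1 : (n - 1 - p) = (n - 1 - (p + 1)) + 1 := by omega
        have h2 := hcol i ⟨n - 1 - p, by omega⟩ ⟨n - 1 - (p + 1), by omega⟩
          (by simp only [Fin.val_mk]; omega)
        rw [if_neg (by simp only [Fin.val_mk]; omega), one_mul] at h2
        rw [h2, Matrix.mul_apply, pow_succ', Matrix.mul_assoc, Matrix.mul_apply]
        apply Finset.sum_congr rfl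
        intro k _
        rw [ih (by omega) k]
    have hcolrep : ∀ j : Fin n, 1 ≤ (j : ℕ) →
        ∀ i : Fin n, C i j = ((N ^ (n - 1 - (j : ℕ))) * C) i lastI := by
      intro j hj i
      have hjn : (j : ℕ) < n := j.isLt
      have h := hrep (n - 1 - (j : ℕ)) (by omega) i
      have he : (⟨n - 1 - (n - 1 - (j : ℕ)), by omega⟩ : Fin n) = j := Fin.ext (by
        simp only [Fin.val_mk]; omega)
      rw [he] at h
      exact h
    -- column 0 vanishes below the diagonal
    have hcol0z : ∀ d : ℕ, ∀ i : Fin n, n - (i : ℕ) ≤ d → 1 ≤ (i : ℕ) →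
        C i ⟨0, by omega⟩ = 0 := by
      intro d
      induction d with
      | zero => intro i h1 h2; exact absurd h1 (by have := i.isLt; omega)
      | succ d ih =>
        intro i h1 h2
        have him : (i : ℕ) - 1 < n := by have := i.isLt; omega
        have h0 := hcol0 ⟨(i : ℕ) - 1, him⟩
        rw [Matrix.mul_apply, Finset.sum_eq_single i] at h0
        · have hNe : N ⟨(i : ℕ) - 1, him⟩ i = u ((i : ℕ) - 1) :=
            hNsup _ _ (by simp only [Fin.val_mk]; omega)
          rw [hNe] at h0
          rcases mul_eq_zero.mp h0 with h' | h'
          · exact absurd h' (hu_ne _)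
          · exact h'
        · intro k _ hk
          by_cases hk1 : (k : ℕ) ≤ (i : ℕ) - 1
          · rw [hNlow _ _ (by simp only [Fin.val_mk]; omega), zero_mul]
          · have hkv : (i : ℕ) + 1 ≤ (k : ℕ) := by
              have := Fin.val_ne_of_ne hk
              omega
            rw [ih k (by have := k.isLt; omega) (by omega), mul_zero]
        · intro h'; exact absurd (Finset.mem_univ _) h'
    -- C is upper triangular
    have hct : ∀ i j : Fin n, j < i → C i j = 0 := by
      intro i j hij
      have hij' : (j : ℕ) < (i : ℕ) := hij
      by_cases hj : (j : ℕ) = 0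
      · have : j = ⟨0, by omega⟩ := Fin.ext hj
        rw [this]
        exact hcol0z n i (by omega) (by omega)
      · rw [hcolrep j (by omega) i, Matrix.mul_apply]
        apply Finset.sum_eq_zero
        intro k _
        rw [powN_lt N hNlow _ i k (by have := k.isLt; have := i.isLt; have := j.isLt; omega),
          zero_mul]
    set v : F := C lastI lastI with hv
    -- diagonal entries
    have hCdiag : ∀ j : Fin n, 1 ≤ (j : ℕ) →
        C j j = (∏ k ∈ Finset.Ico (j : ℕ) (n - 1), u k) * v := by
      intro j hj
      have hjn : (j : ℕ) < n := j.isLt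
      rw [hcolrep j hj j, Matrix.mul_apply, Finset.sum_eq_single lastI]
      · rw [powN_eq N u hNlow hNsup (n - 1 - (j : ℕ)) j lastI (by rw [hlastIv]; omega),
          show (j : ℕ) + (n - 1 - (j : ℕ)) = n - 1 by omega]
      · intro k _ hk
        rw [powN_lt N hNlow _ j k (by
          have := k.isLt
          have hkl : (k : ℕ) ≠ n - 1 := fun e => hk (Fin.ext (by rw [e, hlastIv]))
          omega), zero_mul]
      · intro h'; exact absurd (Finset.mem_univ _) h'
    have hC00 : a * C ⟨0, by omega⟩ ⟨0, by omega⟩ =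
        (∏ k ∈ Finset.Ico 0 (n - 1), u k) * v := by
      have h1 := hcol ⟨0, by omega⟩ ⟨1, by omega⟩ ⟨0, by omega⟩ (by simp)
      rw [if_pos rfl] at h1
      rw [h1, Matrix.mul_apply]
      have h2 : ∀ k : Fin n, N ⟨0, by omega⟩ k * C k ⟨1, by omega⟩ =
          N ⟨0, by omega⟩ k * ((N ^ (n - 1 - 1)) * C) k lastI := by
        intro k
        rw [hcolrep ⟨1, by omega⟩ (by simp) k]
      rw [Finset.sum_congr rfl (fun k _ => h2 k)]
      have h3 : (∑ k, N ⟨0, by omega⟩ k * ((N ^ (n - 1 - 1)) * C) k lastI) =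
          ((N ^ (n - 1 - 1 + 1)) * C) ⟨0, by omega⟩ lastI := by
        rw [pow_succ', Matrix.mul_assoc, Matrix.mul_apply]
      rw [h3, show n - 1 - 1 + 1 = n - 1 by omega, Matrix.mul_apply,
        Finset.sum_eq_single lastI]
      · rw [powN_eq N u hNlow hNsup (n - 1) ⟨0, by omega⟩ lastI (by rw [hlastIv]; simp)]
        simp only [Fin.val_mk, Nat.zero_add]
        rw [hv]
      · intro k _ hk
        rw [powN_lt N hNlow _ ⟨0, by omega⟩ k (by
          have := k.isLt
          have hkl : (k : ℕ) ≠ n - 1 := fun e => hk (Fin.ext (by rw [e, hlastIv]))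
          simp only [Fin.val_mk]
          omega), zero_mul]
      · intro h'; exact absurd (Finset.mem_univ _) h'
    -- determinant computation
    rw [Matrix.det_of_upperTriangular (fun i j h => hct i j h)] at hdet
    set g : ℕ → F := fun m => if h : m < n then C ⟨m, h⟩ ⟨m, h⟩ else 1 with hg
    have hdet2 : ∏ m ∈ Finset.range n, g m = 1 := by
      rw [← prod_fin_eq n (fun j => C j j) g (fun j => by
        simp only [hg, dif_pos j.isLt])]
      exact hdet
    have hvne : v ≠ 0 := by
      intro h0
      have : (∏ j : Fin n, C j j) = 0 :=
        Finset.prod_eq_zero (Finset.mem_univ lastI) h0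
      rw [hdet] at this
      exact one_ne_zero this
    have key : a = (∏ m ∈ Finset.range (n - 1), u m ^ (m + 1)) * v ^ n := by
      calc a = a * ∏ m ∈ Finset.range n, g m := by rw [hdet2, mul_one]
      _ = (a * g 0) * ∏ m ∈ Finset.Ico 1 n, g m := by
            rw [prod_range_split n (by omega) g]; ring
      _ = ((∏ k ∈ Finset.Ico 0 (n - 1), u k) * v) *
            ∏ m ∈ Finset.Ico 1 n, ((∏ k ∈ Finset.Ico m (n - 1), u k) * v) := by
            have hg0 : g 0 = C ⟨0, by omega⟩ ⟨0, by omega⟩ := by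
              simp only [hg, dif_pos (show 0 < n by omega)]
            rw [hg0, hC00]
            congr 1
            apply Finset.prod_congr rfl
            intro m hm
            rcases Finset.mem_Ico.mp hm with ⟨hm1, hm2⟩
            simp only [hg, dif_pos hm2]
            exact hCdiag ⟨m, hm2⟩ hm1
      _ = ∏ m ∈ Finset.range n, ((∏ k ∈ Finset.Ico m (n - 1), u k) * v) := by
            rw [prod_range_split n (by omega) (fun m => (∏ k ∈ Finset.Ico m (n - 1), u k) * v)]
      _ = (∏ m ∈ Finset.range n, ∏ k ∈ Finset.Ico m (n - 1), u k) * v ^ n := by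
            rw [Finset.prod_mul_distrib, Finset.prod_const, Finset.card_range]
      _ = _ := by rw [double_prod]
    refine ⟨(Units.mk0 v hvne)⁻¹, ?_⟩
    have hco : (((Units.mk0 v hvne)⁻¹ : Fˣ) : F) = v⁻¹ := by
      simp
    rw [hco, key]
    field_simp
    rw [mul_comm _ (∏ m ∈ Finset.range (n - 1), u m ^ (m + 1)), mul_assoc, ← mul_pow, one_div,
      inv_mul_cancel₀ hvne, one_pow, mul_one]
  · rintro ⟨θ, hθ⟩
    have hP : (∏ m ∈ Finset.range (n - 1), u m ^ (m + 1)) ≠ 0 :=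
      Finset.prod_ne_zero_iff.mpr fun m _ => pow_ne_zero _ (hu_ne m)
    have ha : a ≠ 0 := by
      intro h0
      rw [h0, mul_zero] at hθ
      exact hP hθ.symm
    have hΘ : (θ : F) ≠ 0 := θ.ne_zero
    set C : Matrix (Fin n) (Fin n) F := fun i j =>
      (if (j : ℕ) = 0 then a⁻¹ else 1) * (θ : F)⁻¹ * (N ^ (n - 1 - (j : ℕ))) i lastI
      with hCdef
    refine ⟨C, ?_, ?_⟩
    · -- determinant is 1
      have hct : ∀ i j : Fin n, j < i → C i j = 0 := by
        intro i j hij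
        have hij' : (j : ℕ) < (i : ℕ) := hij
        have hjn : (j : ℕ) < n := j.isLt
        rw [hCdef]
        simp only []
        rw [powN_lt N hNlow _ i lastI (by rw [hlastIv]; omega), mul_zero]
      rw [Matrix.det_of_upperTriangular (fun i j h => hct i j h)]
      have hdiagC : ∀ j : Fin n, C j j =
          (if (j : ℕ) = 0 then a⁻¹ else 1) * (θ : F)⁻¹ *
            ∏ k ∈ Finset.Ico (j : ℕ) (n - 1), u k := by
        intro j
        have hjn : (j : ℕ) < n := j.isLt
        rw [hCdef]
        simp only []
        rw [powN_eq N u hNlow hNsup (n - 1 - (j : ℕ)) j lastI (by rw [hlastIv]; omega),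
          show (j : ℕ) + (n - 1 - (j : ℕ)) = n - 1 by omega]
      rw [prod_fin_eq n _
        (fun m => (if m = 0 then a⁻¹ else 1) * (θ : F)⁻¹ * ∏ k ∈ Finset.Ico m (n - 1), u k)
        (fun j => hdiagC j)]
      rw [Finset.prod_mul_distrib, Finset.prod_mul_distrib, Finset.prod_const,
        Finset.card_range, double_prod]
      have h1 : (∏ m ∈ Finset.range n, (if m = 0 then a⁻¹ else 1)) = a⁻¹ := by
        rw [prod_range_split n (by omega), if_pos rfl,
          Finset.prod_eq_one (fun m hm => if_neg (by
            rcases Finset.mem_Ico.mp hm with ⟨h1, _⟩; omega)), mul_one]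
      rw [h1, ← hθ]
      field_simp
      rw [← mul_pow, one_div, inv_mul_cancel₀ hΘ, one_pow]
    · -- conjugation equation
      have key : C * (rMat n a - 1) = N * C := by
        ext i j
        rw [mulE, Matrix.mul_apply]
        have hpull : ∀ k, N i k * C k j =
            ((if (j : ℕ) = 0 then a⁻¹ else 1) * (θ : F)⁻¹) *
              (N i k * (N ^ (n - 1 - (j : ℕ))) k lastI) := by
          intro k
          rw [hCdef]
          ring
        rw [Finset.sum_congr rfl (fun k _ => hpull k), ← Finset.mul_sum]
        have hsum : (∑ k, N i k * (N ^ (n - 1 - (j : ℕ))) k lastI) =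
            (N ^ (n - 1 - (j : ℕ) + 1)) i lastI := by
          rw [pow_succ', Matrix.mul_apply]
        rw [hsum]
        have hjn : (j : ℕ) < n := j.isLt
        split
        next h0 =>
          rw [powN_lt N hNlow _ i lastI (by rw [hlastIv]; omega), mul_zero]
        next h0 =>
          rw [hCdef]
          simp only [Fin.val_mk]
          by_cases h1 : (j : ℕ) = 1
          · rw [if_pos h1, if_pos (by omega),
              show n - 1 - ((j : ℕ) - 1) = n - 1 - (j : ℕ) + 1 by omega]
            field_simp
          · rw [if_neg h1, if_neg (by omega),
              show n - 1 - ((j : ℕ) - 1) = n - 1 - (j : ℕ) + 1 by omega]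
            ring
      calc C * rMat n a = C + C * (rMat n a - 1) := by
            rw [Matrix.mul_sub, Matrix.mul_one]; abel
      _ = C + N * C := by rw [key]
      _ = x * C := by rw [hNdef, Matrix.sub_mul, Matrix.one_mul]; abel
end

section
/- Let q be odd, G = SL_3(q), u the unipotent matrix with u₁₂ = 1 and all other off-diagonal entries 0 (type (2,1)). Let r = u and s the transpose-like conjugate with s₃₁ = 1 (obtained by conjugating r by the 3-cycle permutation matrix). Then (rs)² ≠ (sr)², the subgroup H = ⟨r, s⟩ consists of the matrices with rows (1, a, 0; 0, 1, 0; c, b+ac, 1) for a, b, c ∈ F_p, and the H-conjugacy classes of r and s are distinct; hence the class of u in SL_3(q) is of type D. -/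
private def Mm {F : Type*} [Field F] (a b c : F) : Matrix (Fin 3) (Fin 3) F :=
  !![1, a, 0; 0, 1, 0; c, b + a*c, 1]

private lemma Mm_mul {F : Type*} [Field F] (a b c a' b' c' : F) :
    Mm a b c * Mm a' b' c' = Mm (a+a') (b+b'-a*c') (c+c') := by
  simp only [Mm, Matrix.mul_fin_three]
  ext i j
  fin_cases i <;> fin_cases j <;> simp [Matrix.vecHead, Matrix.vecTail] <;> ring

private lemma Mm_one {F : Type*} [Field F] : (Mm 0 0 0 : Matrix (Fin 3) (Fin 3) F) = 1 := by
  ext i j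
  fin_cases i <;> fin_cases j <;> simp [Mm, Matrix.one_apply, Matrix.vecHead, Matrix.vecTail]

private lemma Mm_r {F : Type*} [Field F] :
    (1 + Matrix.single 0 1 1 : Matrix (Fin 3) (Fin 3) F) = Mm 1 0 0 := by
  ext i j
  fin_cases i <;> fin_cases j <;>
    simp [Mm, Matrix.single, Matrix.one_apply, Matrix.vecHead, Matrix.vecTail]

private lemma Mm_rinv {F : Type*} [Field F] :
    (1 - Matrix.single 0 1 1 : Matrix (Fin 3) (Fin 3) F) = Mm (-1) 0 0 := by
  ext i j
  fin_cases i <;> fin_cases j <;>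
    simp [Mm, Matrix.single, Matrix.one_apply, Matrix.vecHead, Matrix.vecTail]

private lemma Mm_s {F : Type*} [Field F] :
    (1 + Matrix.single 2 0 1 : Matrix (Fin 3) (Fin 3) F) = Mm 0 0 1 := by
  ext i j
  fin_cases i <;> fin_cases j <;>
    simp [Mm, Matrix.single, Matrix.one_apply, Matrix.vecHead, Matrix.vecTail]

private lemma Mm_sinv {F : Type*} [Field F] :
    (1 - Matrix.single 2 0 1 : Matrix (Fin 3) (Fin 3) F) = Mm 0 0 (-1) := by
  ext i j
  fin_cases i <;> fin_cases j <;>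
    simp [Mm, Matrix.single, Matrix.one_apply, Matrix.vecHead, Matrix.vecTail]

private def Sm {F : Type*} [Field F] {p : ℕ} (φ : ZMod p →+* F) :
    Submonoid (Matrix (Fin 3) (Fin 3) F) where
  carrier := {M | ∃ a b c : ZMod p, M = Mm (φ a) (φ b) (φ c)}
  one_mem' := ⟨0, 0, 0, by simp [Mm_one]⟩
  mul_mem' := by
    rintro x y ⟨a, b, c, rfl⟩ ⟨a', b', c', rfl⟩
    exact ⟨a + a', b + b' - a * c', c + c', by simp [Mm_mul, map_add, map_sub, map_mul]⟩


/-- Let `q = p^m` with `p` an odd prime, `F = F_q`, and in `SL_3(q)` let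
`r = u = I₃ + e₁₂` (unipotent of type `(2,1)`) and `s = I₃ + e₃₁` (the conjugate
of `r` by the 3-cycle permutation matrix).  Then `(rs)² ≠ (sr)²`, the subgroup
`H = ⟨r, s⟩` consists exactly of the matrices `(1, a, 0; 0, 1, 0; c, b+ac, 1)`
with `a, b, c ∈ F_p`, and the `H`-conjugacy classes of `r` and `s` are
distinct; hence the class of `u` in `SL_3(q)` is of type D. -/
theorem stmt11 {F : Type*} [Field F] [Fintype F] (p : ℕ) [Fact p.Prime]
    [CharP F p] (hp2 : p ≠ 2) :
    let φ : ZMod p →+* F := ZMod.castHom (dvd_refl p) F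
    let r : Matrix (Fin 3) (Fin 3) F := 1 + Matrix.single 0 1 1
    let s : Matrix (Fin 3) (Fin 3) F := 1 + Matrix.single 2 0 1
    let H := Submonoid.closure
      {r, 1 - Matrix.single 0 1 1, s, 1 - Matrix.single 2 0 1}
    (r * s) ^ 2 ≠ (s * r) ^ 2 ∧
    (H : Set (Matrix (Fin 3) (Fin 3) F)) =
      {M | ∃ a b c : ZMod p,
        M = !![1, φ a, 0; 0, 1, 0; φ c, φ b + φ a * φ c, 1]} ∧
    ¬ ∃ k ∈ H, k * r = s * k := by
  intro φ r s H
  have hr : r = Mm 1 0 0 := Mm_r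
  have hs : s = Mm 0 0 1 := Mm_s
  have h2 : (2 : F) ≠ 0 := by
    have hp := Fact.out (p := p.Prime)
    intro h
    have h2' : ((2 : ℕ) : F) = 0 := by exact_mod_cast h
    have := (CharP.cast_eq_zero_iff F p 2).mp h2'
    exact hp2 ((Nat.prime_dvd_prime_iff_eq hp Nat.prime_two).mp this)
  have hφ : ∀ x : ZMod p, φ x = ((x.val : ℕ) : F) := by
    intro x
    rw [ZMod.castHom_apply, ← ZMod.natCast_val]
  -- generators in H
  have hrH : Mm (1 : F) 0 0 ∈ H := by
    rw [← Mm_r]; exact Submonoid.subset_closure (by simp [r])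
  have hriH : Mm (-1 : F) 0 0 ∈ H := by
    rw [← Mm_rinv]; exact Submonoid.subset_closure (by simp)
  have hsH : Mm (0 : F) 0 1 ∈ H := by
    rw [← Mm_s]; exact Submonoid.subset_closure (by simp [s])
  have hsiH : Mm (0 : F) 0 (-1) ∈ H := by
    rw [← Mm_sinv]; exact Submonoid.subset_closure (by simp)
  have hpow_r : ∀ n : ℕ, Mm ((n : F)) 0 0 ∈ H := by
    intro n
    induction n with
    | zero => simpa using Mm_one (F := F) ▸ H.one_mem
    | succ n ih =>
      have := H.mul_mem ih hrH
      rw [Mm_mul] at this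
      convert this using 2 <;> push_cast <;> ring
  have hpow_s : ∀ n : ℕ, Mm (0 : F) 0 (n : F) ∈ H := by
    intro n
    induction n with
    | zero => simpa using Mm_one (F := F) ▸ H.one_mem
    | succ n ih =>
      have := H.mul_mem ih hsH
      rw [Mm_mul] at this
      convert this using 2 <;> push_cast <;> ring
  have htH : Mm (0 : F) (-1) 0 ∈ H := by
    have key : Mm (1:F) 0 0 * Mm 0 0 1 * Mm (-1) 0 0 * Mm 0 0 (-1) = Mm 0 (-1) 0 := by
      rw [Mm_mul, Mm_mul, Mm_mul]; norm_num
    rw [← key]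
    exact H.mul_mem (H.mul_mem (H.mul_mem hrH hsH) hriH) hsiH
  have hpow_t : ∀ n : ℕ, Mm (0 : F) (-(n : F)) 0 ∈ H := by
    intro n
    induction n with
    | zero => simpa using Mm_one (F := F) ▸ H.one_mem
    | succ n ih =>
      have := H.mul_mem ih htH
      rw [Mm_mul] at this
      convert this using 2 <;> push_cast <;> ring
  have haH : ∀ a : ZMod p, Mm (φ a) 0 0 ∈ H := fun a => (hφ a) ▸ hpow_r a.val
  have hcH : ∀ c : ZMod p, Mm (0 : F) 0 (φ c) ∈ H := fun c => (hφ c) ▸ hpow_s c.val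
  have hbH : ∀ d : ZMod p, Mm (0 : F) (φ d) 0 ∈ H := by
    intro d
    have hd : φ d = -((((-d).val : ℕ)) : F) := by
      rw [← hφ, map_neg, neg_neg]
    rw [hd]
    exact hpow_t (-d).val
  have hmemH : ∀ a b c : ZMod p, Mm (φ a) (φ b) (φ c) ∈ H := by
    intro a b c
    have key : Mm (φ a) 0 0 * Mm 0 (φ (b + a*c)) 0 * Mm 0 0 (φ c)
        = Mm (φ a) (φ b) (φ c) := by
      rw [Mm_mul, Mm_mul, map_add, map_mul]
      ring_nf
    rw [← key]
    exact H.mul_mem (H.mul_mem (haH a) (hbH _)) (hcH c)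
  -- the submonoid S
  have hset : (H : Set (Matrix (Fin 3) (Fin 3) F)) =
      {M | ∃ a b c : ZMod p, M = Mm (φ a) (φ b) (φ c)} := by
    apply Set.Subset.antisymm
    · have hle : H ≤ Sm φ := by
        apply Submonoid.closure_le.mpr
        rintro x hx
        simp only [Set.mem_insert_iff, Set.mem_singleton_iff] at hx
        rcases hx with rfl | rfl | rfl | rfl
        · exact ⟨1, 0, 0, by simp [hr]⟩
        · exact ⟨-1, 0, 0, by simp [Mm_rinv]⟩
        · exact ⟨0, 0, 1, by simp [hs]⟩
        · exact ⟨0, 0, -1, by simp [Mm_sinv]⟩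
      exact fun x hx => hle hx
    · rintro x ⟨a, b, c, rfl⟩
      exact hmemH a b c
  refine ⟨?_, ?_, ?_⟩
  · intro h
    rw [hr, hs, sq, sq, Mm_mul, Mm_mul, Mm_mul, Mm_mul] at h
    have h21 := congrFun (congrFun h 2) 1
    simp [Mm, Matrix.vecHead, Matrix.vecTail] at h21
    apply h2
    linear_combination -h21
  · exact hset
  · rintro ⟨k, hk, heq⟩
    have hk' : k ∈ (H : Set (Matrix (Fin 3) (Fin 3) F)) := hk
    rw [hset] at hk'
    obtain ⟨a, b, c, rfl⟩ := hk'
    rw [hr, hs, Mm_mul, Mm_mul] at heq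
    have h01 := congrFun (congrFun heq 0) 1
    simp [Mm, Matrix.vecHead, Matrix.vecTail] at h01
end

section
/- Let q > 3 be a prime power, u = I₂ + e₁₂ ∈ GL_2(q). Let R (resp. S) be the set of conjugates AuA⁻¹ with det A a non-square (resp. square) in F_q^×. Then R and S are disjoint subracks of the conjugacy class of u in GL_2(q) with R ▷ S ⊆ S and S ▷ R ⊆ R, and there exist r ∈ R, s ∈ S with r ▷ (s ▷ (r ▷ s)) ≠ s. Hence the conjugacy class of u in GL_2(q) is of type D. -/
open Matrix

section Stmt12Aux
variable {F : Type*} [Field F]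

private lemma stmt12_u_val :
    (1 + Matrix.single 0 1 1 : Matrix (Fin 2) (Fin 2) F) = !![1,1;0,1] := by
  ext i j
  fin_cases i <;> fin_cases j <;>
    simp [Matrix.single, Matrix.one_apply]

private lemma stmt12_centralizer_sq {M : Matrix (Fin 2) (Fin 2) F}
    (h : M * !![1,1;0,1] = !![1,1;0,1] * M) : IsSquare M.det := by
  have h00 := Matrix.ext_iff.mpr h 0 0
  have h01 := Matrix.ext_iff.mpr h 0 1
  simp [Matrix.mul_apply, Fin.sum_univ_two] at h00 h01
  refine ⟨M 0 0, ?_⟩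
  rw [Matrix.det_fin_two]
  linear_combination (-(M 0 0)) * h01 - (M 0 1) * h00

private lemma stmt12_exists_nonsq [Fintype F] (hq : Odd (Fintype.card F))
    (hq3 : 3 < Fintype.card F) : ∃ e : F, ¬ IsSquare e ∧ e ≠ 2 := by
  have hchar : ringChar F ≠ 2 := by
    intro h2
    have := FiniteField.even_card_of_char_two h2
    rw [Nat.odd_iff] at hq
    omega
  obtain ⟨b, hb⟩ := FiniteField.exists_nonsquare hchar
  classical
  have ha : ∃ a : F, a ∉ ({0, 1, -1} : Finset F) := by
    by_contra hcon
    push_neg at hcon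
    have hsub : (Finset.univ : Finset F) ⊆ {0, 1, -1} := fun a _ => hcon a
    have := Finset.card_le_card hsub
    have h3 : ({0, 1, -1} : Finset F).card ≤ 3 := by
      apply le_trans (Finset.card_insert_le _ _)
      apply Nat.succ_le_succ
      apply le_trans (Finset.card_insert_le _ _)
      simp
    rw [Finset.card_univ] at this
    omega
  obtain ⟨a, ha⟩ := ha
  simp only [Finset.mem_insert, Finset.mem_singleton, not_or] at ha
  obtain ⟨ha0, ha1, han1⟩ := ha
  have hb0 : b ≠ 0 := fun h => hb ⟨0, by simp [h]⟩
  have hba : ¬ IsSquare (b * a ^ 2) := by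
    rintro ⟨c, hc⟩
    exact hb ⟨c * a⁻¹, by field_simp at hc ⊢; linear_combination hc⟩
  have ha2 : a ^ 2 ≠ 1 := by
    intro h
    have : (a - 1) * (a + 1) = 0 := by ring_nf; linear_combination h
    rcases mul_eq_zero.mp this with h | h
    · exact ha1 (sub_eq_zero.mp h)
    · exact han1 (by linear_combination h)
  by_cases hb2 : b = 2
  · refine ⟨b * a ^ 2, hba, ?_⟩
    rw [hb2]; intro h
    have h20 : (2 : F) ≠ 0 := fun h0 => hb ⟨0, by rw [hb2, h0]; ring⟩
    refine ha2 ?_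
    field_simp at h
    grind
  · exact ⟨b, hb, hb2⟩

end Stmt12Aux

/-- Let `q > 3` be odd and `u = I₂ + e₁₂ ∈ GL_2(q)`.  Let `R` (resp. `S`) be the
set of conjugates `A u A⁻¹` with `det A` a non-square (resp. a square) in
`F_q^×`.  Then `R` and `S` are disjoint subracks of the conjugacy class of `u`
covering it, with `R ▷ S ⊆ S` and `S ▷ R ⊆ R`, and there exist `r ∈ R`, `s ∈ S`
with `r ▷ (s ▷ (r ▷ s)) ≠ s`; hence the class of `u` in `GL_2(q)` is of
type D. -/
theorem stmt12 {F : Type*} [Field F] [Fintype F]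
    (hq : Odd (Fintype.card F)) (hq3 : 3 < Fintype.card F) :
    let u : Matrix (Fin 2) (Fin 2) F := 1 + Matrix.single 0 1 1
    let R : Set (Matrix (Fin 2) (Fin 2) F) :=
      {m | ∃ A : Matrix (Fin 2) (Fin 2) F,
        IsUnit A.det ∧ ¬ IsSquare A.det ∧ m = A * u * A⁻¹}
    let S : Set (Matrix (Fin 2) (Fin 2) F) :=
      {m | ∃ A : Matrix (Fin 2) (Fin 2) F,
        IsUnit A.det ∧ IsSquare A.det ∧ m = A * u * A⁻¹}
    Disjoint R S ∧
    R ∪ S = {m | ∃ A : Matrix (Fin 2) (Fin 2) F, IsUnit A.det ∧ m = A * u * A⁻¹} ∧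
    (∀ x ∈ R, ∀ y ∈ R, x * y * x⁻¹ ∈ R) ∧
    (∀ x ∈ S, ∀ y ∈ S, x * y * x⁻¹ ∈ S) ∧
    (∀ x ∈ R, ∀ y ∈ S, x * y * x⁻¹ ∈ S) ∧
    (∀ x ∈ S, ∀ y ∈ R, x * y * x⁻¹ ∈ R) ∧
    ∃ r ∈ R, ∃ s ∈ S, r * (s * (r * s * r⁻¹) * s⁻¹) * r⁻¹ ≠ s := by
  intro u R S
  have huv : u = !![1,1;0,1] := stmt12_u_val
  have hudet : u.det = (1 : F) := by rw [huv]; simp [Matrix.det_fin_two_of]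
  -- conjugation lemma
  have conj : ∀ (A B : Matrix (Fin 2) (Fin 2) F), IsUnit A.det → IsUnit B.det →
      (A * u * A⁻¹) * (B * u * B⁻¹) * (A * u * A⁻¹)⁻¹
        = ((A * u * A⁻¹) * B) * u * ((A * u * A⁻¹) * B)⁻¹ ∧
      ((A * u * A⁻¹) * B).det = B.det := by
    intro A B hA hB
    have hxdet : (A * u * A⁻¹).det = 1 := by
      rw [Matrix.det_mul, Matrix.det_mul, hudet, Matrix.det_nonsing_inv,
        Ring.inverse_eq_inv]
      field_simp
      exact div_self hA.ne_zero
    constructor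
    · simp [Matrix.mul_inv_rev, Matrix.nonsing_inv_nonsing_inv A hA, mul_assoc]
    · rw [Matrix.det_mul, hxdet, one_mul]
  -- square parity is conjugation invariant
  have sqiff : ∀ (A B : Matrix (Fin 2) (Fin 2) F), IsUnit A.det → IsUnit B.det →
      A * u * A⁻¹ = B * u * B⁻¹ → IsSquare B.det → IsSquare A.det := by
    intro A B hA hB h hsB
    have h1 : A * u = B * u * B⁻¹ * A := by
      calc A * u = (A * u * A⁻¹) * A := by
            rw [mul_assoc, Matrix.nonsing_inv_mul A hA, mul_one]
        _ = B * u * B⁻¹ * A := by rw [h]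
    have hcomm : (B⁻¹ * A) * !![1,1;0,1] = !![1,1;0,1] * (B⁻¹ * A) := by
      rw [← huv]
      calc (B⁻¹ * A) * u = B⁻¹ * (A * u) := by rw [mul_assoc]
        _ = B⁻¹ * (B * u * B⁻¹ * A) := by rw [h1]
        _ = u * (B⁻¹ * A) := by
            simp only [← mul_assoc, Matrix.nonsing_inv_mul B hB, one_mul]
    have hsM : IsSquare (B⁻¹ * A).det := stmt12_centralizer_sq hcomm
    have hAdet : A.det = B.det * (B⁻¹ * A).det := by
      have hBM : B * (B⁻¹ * A) = A := by
        rw [← mul_assoc, Matrix.mul_nonsing_inv B hB, one_mul]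
      rw [← Matrix.det_mul, hBM]
    obtain ⟨t, ht⟩ := hsB
    obtain ⟨c, hc⟩ := hsM
    exact ⟨t * c, by rw [hAdet, ht, hc]; ring⟩
  refine ⟨?_, ?_, ?_, ?_, ?_, ?_, ?_⟩
  · -- disjoint
    rw [Set.disjoint_left]
    rintro m ⟨A, hA, hAns, rfl⟩ ⟨B, hB, hBs, hm⟩
    exact hAns (sqiff A B hA hB hm hBs)
  · -- union
    ext m
    constructor
    · rintro (⟨A, hA, -, rfl⟩ | ⟨A, hA, -, rfl⟩) <;> exact ⟨A, hA, rfl⟩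
    · rintro ⟨A, hA, rfl⟩
      by_cases hs : IsSquare A.det
      · exact Or.inr ⟨A, hA, hs, rfl⟩
      · exact Or.inl ⟨A, hA, hs, rfl⟩
  · rintro x ⟨A, hA, hAns, rfl⟩ y ⟨B, hB, hBns, rfl⟩
    obtain ⟨heq, hdet⟩ := conj A B hA hB
    exact ⟨(A * u * A⁻¹) * B, hdet ▸ hB, hdet ▸ hBns, heq⟩
  · rintro x ⟨A, hA, hAs, rfl⟩ y ⟨B, hB, hBs, rfl⟩
    obtain ⟨heq, hdet⟩ := conj A B hA hB
    exact ⟨(A * u * A⁻¹) * B, hdet ▸ hB, hdet ▸ hBs, heq⟩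
  · rintro x ⟨A, hA, hAns, rfl⟩ y ⟨B, hB, hBs, rfl⟩
    obtain ⟨heq, hdet⟩ := conj A B hA hB
    exact ⟨(A * u * A⁻¹) * B, hdet ▸ hB, hdet ▸ hBs, heq⟩
  · rintro x ⟨A, hA, hAs, rfl⟩ y ⟨B, hB, hBns, rfl⟩
    obtain ⟨heq, hdet⟩ := conj A B hA hB
    exact ⟨(A * u * A⁻¹) * B, hdet ▸ hB, hdet ▸ hBns, heq⟩
  · -- the witness
    obtain ⟨e, he, he2⟩ := stmt12_exists_nonsq hq hq3
    have he0 : e ≠ 0 := fun h => he ⟨0, by rw [h]; ring⟩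
    set r : Matrix (Fin 2) (Fin 2) F := !![1-e, e; -e, 1+e] with hrdef
    set A : Matrix (Fin 2) (Fin 2) F := !![1, 0; 1, e⁻¹] with hAdef
    have hAdet : A.det = e⁻¹ := by simp [hAdef, Matrix.det_fin_two_of]
    have hAu : IsUnit A.det := by
      rw [hAdet]; exact isUnit_iff_ne_zero.mpr (inv_ne_zero he0)
    have hAns : ¬ IsSquare A.det := by
      rw [hAdet]
      rintro ⟨c, hc⟩
      have hc0 : c ≠ 0 := by
        intro h0; rw [h0, mul_zero] at hc; exact (inv_ne_zero he0) hc
      refine he ⟨c⁻¹, ?_⟩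
      rw [← inv_inv e, hc, mul_inv]
    have hAinv : A⁻¹ = !![1, 0; -e, e] := by
      apply Matrix.inv_eq_right_inv
      rw [hAdef, Matrix.mul_fin_two, Matrix.one_fin_two]
      congr 1 <;> field_simp <;> simp
    have hrA : r = A * u * A⁻¹ := by
      rw [huv, hAdef, hAinv, Matrix.mul_fin_two, Matrix.mul_fin_two, hrdef]
      ext i j
      fin_cases i <;> fin_cases j <;> simp [he0] <;> field_simp <;> ring
    have hrdet : r.det = 1 := by
      rw [hrdef]; simp [Matrix.det_fin_two_of]; ring
    refine ⟨r, ⟨A, hAu, hAns, hrA⟩, u, ⟨1, by simp, by simp, by simp⟩, ?_⟩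
    intro h
    have hru : IsUnit r := (Matrix.isUnit_iff_isUnit_det r).mpr (by rw [hrdet]; exact isUnit_one)
    have hsu : IsUnit u := (Matrix.isUnit_iff_isUnit_det u).mpr (by rw [hudet]; exact isUnit_one)
    obtain ⟨rU, hrU⟩ := hru
    obtain ⟨sU, hsU⟩ := hsu
    rw [← hrU, ← hsU] at h
    have hU : rU * (sU * (rU * sU * rU⁻¹) * sU⁻¹) * rU⁻¹ = sU := by
      apply Units.ext
      simpa [Matrix.coe_units_inv] using h
    have h2 : rU * sU * rU * sU = sU * (rU * sU * rU) := by
      have haux : sU * (rU * sU * rU)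
          = (rU * (sU * (rU * sU * rU⁻¹) * sU⁻¹) * rU⁻¹) * (rU * (sU * rU)) := by
        rw [hU]; group
      rw [haux]; group
    have h3 : r * u * r * u = u * (r * u * r) := by
      have := congrArg (fun z : (Matrix (Fin 2) (Fin 2) F)ˣ => (z : Matrix (Fin 2) (Fin 2) F)) h2
      simpa [Units.val_mul, hrU, hsU, mul_assoc] using this
    rw [huv, hrdef] at h3
    have h4 := Matrix.ext_iff.mpr h3 1 1
    simp [Matrix.mul_apply, Fin.sum_univ_two] at h4
    have : e * (2 - e) = 0 := by linear_combination -h4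
    rcases mul_eq_zero.mp this with h5 | h5
    · exact he0 h5
    · exact he2 (by linear_combination -h5)
end

section
/- Let q be even and n ≥ 2, and let O be the conjugacy class in SL_n(q) of r = I_n + e_{1,n} (unipotent of type (2,1,…,1)). Then O is not of type D: for any s ∈ O with [r, s] ≠ 1, either (rs)² = (sr)² or the conjugacy classes of r and s in ⟨r, s⟩ coincide. -/
namespace Stmt13Aux

open Matrix Polynomial

lemma dvd_lem {F : Type*} [Field F] [Fintype F] [CharP F 2] (c : F) (hc : c ≠ 0) :
    ((X : F[X]) - 1) * (X ^ 2 + C c * X + 1) ∣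
      (X : F[X]) ^ (Fintype.card F ^ 2 - 1) - 1 := by
  classical
  set q := Fintype.card F with hqdef
  set m := q ^ 2 - 1 with hmdef
  set K := AlgebraicClosure F
  haveI : CharP K 2 := charP_of_injective_algebraMap (algebraMap F K).injective 2
  set c' : K := algebraMap F K c with hc'def
  have hc' : c' ≠ 0 := by
    simpa [hc'def] using (map_ne_zero_iff _ (algebraMap F K).injective).mpr hc
  have h2K : (2 : K) = 0 := by exact_mod_cast CharP.cast_eq_zero K 2
  -- get a root λ of X² + c'X + 1 in K
  obtain ⟨l, hl⟩ : ∃ l : K, l ^ 2 + c' * l + 1 = 0 := by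
    obtain ⟨l, hl⟩ := IsAlgClosed.exists_root (X ^ 2 + C c' * X + 1 : K[X]) (by
      have : ((X : K[X]) ^ 2 + C c' * X + 1).degree = 2 := by
        compute_degree!
      rw [this]; norm_num)
    refine ⟨l, ?_⟩
    simpa using hl
  have hlroot : l * l + c' * l = 1 := by linear_combination hl - h2K
  set mu : K := l + c' with hmudef
  have hmu : mu ^ 2 + c' * mu + 1 = 0 := by
    rw [hmudef]; linear_combination hl + (l * c' + c' * c') * h2K
  have hlmu_mul : l * mu = 1 := by rw [hmudef]; linear_combination hlroot
  have hl0 : l ≠ 0 := by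
    intro h; rw [h] at hl; simp at hl
  have hmu0 : mu ≠ 0 := by
    intro h; rw [h] at hmu; simp at hmu
  have hlnemu : l ≠ mu := by
    intro h
    apply hc'
    have h2 : l = l + c' := h.trans hmudef
    linear_combination -h2
  -- root characterization
  have hchar : ∀ x : K, x ^ 2 + c' * x + 1 = 0 → x = l ∨ x = mu := by
    intro x hx
    have hfac : (x + l) * (x + mu) = 0 := by
      rw [hmudef]
      linear_combination hx - hlroot + (-1 + l * x + l * c' + l ^ 2) * h2K
    rcases mul_eq_zero.mp hfac with h | h
    · left; linear_combination h - l * h2K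
    · right; rw [hmudef]; rw [hmudef] at h; linear_combination h - (l + c') * h2K
  -- q-th power facts
  obtain ⟨k, hk2, hqcard⟩ := FiniteField.card F 2
  have hq2 : 2 ∣ q := by rw [hqdef, hqcard]; exact dvd_pow_self 2 k.ne_zero
  have hcq : c' ^ q = c' := by
    rw [hc'def, ← map_pow, FiniteField.pow_card]
  have hfrob : ∀ x : K, x ^ 2 + c' * x + 1 = 0 → (x ^ q) ^ 2 + c' * x ^ q + 1 = 0 := by
    intro x hx
    have : (x ^ 2 + c' * x + 1) ^ q = 0 := by rw [hx]; exact zero_pow (by positivity)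
    rw [hqdef, hqcard] at this ⊢
    rw [add_pow_char_pow, add_pow_char_pow, mul_pow, one_pow, ← pow_mul, mul_comm 2 (2^(k:ℕ)),
      pow_mul] at this
    rw [← hqcard, ← hqdef, hcq] at this
    rw [hqdef, hqcard] at this
    exact this
  have hinj : ∀ a b : K, a ^ q = b ^ q → a = b := by
    intro a b hab
    rw [hqdef, hqcard] at hab
    rw [← iterate_frobenius, ← iterate_frobenius] at hab
    exact Function.Injective.iterate (frobenius_inj K 2) (k : ℕ) hab
  -- every root x satisfies x^(q^2) = x
  have hfix : ∀ x : K, x ^ 2 + c' * x + 1 = 0 → x ^ q ^ 2 = x := by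
    intro x hx
    have hxq := hchar _ (hfrob x hx)
    have hx' := hchar _ hx
    have hpow : x ^ q ^ 2 = (x ^ q) ^ q := by rw [← pow_mul, sq]
    have hlq := hchar _ (hfrob l hl)
    have hmuq := hchar _ (hfrob mu hmu)
    rcases hxq with hxl | hxmu
    · rcases hlq with h1 | h1
      · have : x = l := hinj _ _ (by rw [hxl, h1])
        rw [hpow, hxl, h1, this]
      · rcases hx' with h2 | h2
        · exfalso; rw [h2] at hxl; exact hlnemu (hxl.symm.trans h1)
        · rw [hpow, hxl, h1, h2]
    · rcases hmuq with h1 | h1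
      · rcases hx' with h2 | h2
        · rw [hpow, hxmu, h1, h2]
        · exfalso; rw [h2] at hxmu; exact hlnemu (h1.symm.trans hxmu)
      · have : x = mu := hinj _ _ (by rw [hxmu, h1])
        rw [hpow, hxmu, h1, this]
  have hq2pos : 1 ≤ q ^ 2 := Nat.one_le_pow _ _ Fintype.card_pos
  have hm1 : m + 1 = q ^ 2 := by rw [hmdef]; omega
  have hpowm : ∀ x : K, x ^ 2 + c' * x + 1 = 0 → x ^ m = 1 := by
    intro x hx
    have hx0 : x ≠ 0 := by intro h; rw [h] at hx; simp at hx
    have : x ^ m * x = 1 * x := by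
      rw [← pow_succ, hm1, hfix x hx, one_mul]
    exact mul_right_cancel₀ hx0 this
  have h2KX : (2 : K[X]) = 0 := by exact_mod_cast CharP.cast_eq_zero K[X] 2
  have hlm : l ^ m = 1 := hpowm l hl
  have hmum : mu ^ m = 1 := hpowm mu hmu
  have h1C : Polynomial.C l + C mu = C c' := by
    rw [← _root_.map_add]; congr 1; rw [hmudef]; linear_combination l * h2K
  have h2C : Polynomial.C l * C mu = 1 := by rw [← _root_.map_mul, hlmu_mul, _root_.map_one]
  have hfacK : (X ^ 2 + C c' * X + 1 : K[X]) = (X - C l) * (X - C mu) := by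
    linear_combination (X : K[X]) * h1C - h2C + (C c' * X) * h2KX
  have hdvd1 : (X - C l) ∣ (X : K[X]) ^ m - 1 := by
    rw [dvd_iff_isRoot]; simp [IsRoot, hlm]
  have hdvd2 : (X - C mu) ∣ (X : K[X]) ^ m - 1 := by
    rw [dvd_iff_isRoot]; simp [IsRoot, hmum]
  have hcop : IsCoprime ((X : K[X]) - C l) (X - C mu) :=
    isCoprime_X_sub_C_of_isUnit_sub (isUnit_iff_ne_zero.mpr (sub_ne_zero.mpr hlnemu))
  have hdvdK : (X ^ 2 + C c' * X + 1 : K[X]) ∣ (X : K[X]) ^ m - 1 := by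
    rw [hfacK]; exact hcop.mul_dvd hdvd1 hdvd2
  have hmap : (X ^ 2 + C c * X + 1 : F[X]).map (algebraMap F K)
      = (X ^ 2 + C c' * X + 1 : K[X]) := by
    simp [hc'def]
  have hmapm : ((X : F[X]) ^ m - 1).map (algebraMap F K) = (X : K[X]) ^ m - 1 := by
    simp
  have hdvdF2 : (X ^ 2 + C c * X + 1 : F[X]) ∣ (X : F[X]) ^ m - 1 := by
    rw [← Polynomial.map_dvd_map' (algebraMap F K), hmap, hmapm]
    exact hdvdK
  have hdvdF1 : ((X : F[X]) - 1) ∣ (X : F[X]) ^ m - 1 := by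
    have h := dvd_iff_isRoot.mpr (show IsRoot ((X : F[X]) ^ m - 1) 1 by simp)
    simpa using h
  have hnotdvd : ¬ ((X : F[X]) - C 1) ∣ (X ^ 2 + C c * X + 1) := by
    rw [dvd_iff_isRoot]
    intro h
    have h2F : (1 : F) + 1 = 0 := by
      rw [one_add_one_eq_two]
      exact_mod_cast CharP.cast_eq_zero F 2
    have hev : (1 : F) ^ 2 + c * 1 + 1 = 0 := by simpa [IsRoot] using h
    exact hc (by linear_combination hev - h2F)
  have hcopF : IsCoprime ((X : F[X]) - C 1) (X ^ 2 + C c * X + 1) :=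
    ((irreducible_X_sub_C (1 : F)).coprime_iff_not_dvd).mpr hnotdvd
  have hfin := hcopF.mul_dvd (show ((X : F[X]) - C 1) ∣ _ by rw [Polynomial.C_1]; exact hdvdF1) hdvdF2
  rw [show ((X : F[X]) - 1) = X - C 1 by rw [Polynomial.C_1]]
  exact hfin

variable {F : Type*} [Field F] {n : ℕ}

lemma sandwich (i0 iN : Fin n) (A B : Matrix (Fin n) (Fin n) F) (i j : Fin n) :
    (A * single i0 iN (1:F) * B) i j = A i i0 * B iN j := by
  rw [Matrix.mul_apply]
  rw [Finset.sum_eq_single iN]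
  · simp
  · intro b _ hb
    rw [Matrix.mul_single_apply_of_ne (hbj := hb), zero_mul]
  · simp

lemma sand1 (i0 iN : Fin n) (Y : Matrix (Fin n) (Fin n) F) :
    single i0 iN (1:F) * Y * single i0 iN (1:F)
      = Y iN i0 • single i0 iN (1:F) := by
  ext i j
  by_cases hi : i = i0
  · subst hi
    by_cases hj : j = iN
    · subst hj
      rw [Matrix.mul_assoc]
      simp [mul_comm]
    · rw [Matrix.mul_single_apply_of_ne (hbj := hj)]
      simp [Matrix.smul_apply, Matrix.single, hj]
      exact fun h => absurd h.symm hj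
  · rw [Matrix.mul_assoc, Matrix.single_mul_apply_of_ne (h := hi)]
    simp [Matrix.smul_apply, Matrix.single, hi]
    exact fun h => absurd h.symm hi

section algebra_facts

variable [Fintype F] [CharP F 2]

lemma matrix_relations (i0 iN : Fin n) (hne : i0 ≠ iN)
    (Cm : Matrix (Fin n) (Fin n) F) (hC : IsUnit Cm.det) :
    ∀ E N : Matrix (Fin n) (Fin n) F, E = single i0 iN (1:F) →
    N = Cm * E * Cm⁻¹ →
    E * E = 0 ∧ N * N = 0 ∧ E * (N * E) = N iN i0 • E ∧ N * (E * N) = N iN i0 • N := by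
  rintro E N hE hN
  have hCC : Cm * Cm⁻¹ = 1 := Matrix.mul_nonsing_inv Cm hC
  have hCC' : Cm⁻¹ * Cm = 1 := Matrix.nonsing_inv_mul Cm hC
  have hEE : E * E = 0 := by
    rw [hE, Matrix.single_mul_single_of_ne (h := Ne.symm hne)]
  have hNN : N * N = 0 := by
    rw [hN]
    calc Cm * E * Cm⁻¹ * (Cm * E * Cm⁻¹)
        = Cm * E * (Cm⁻¹ * Cm) * E * Cm⁻¹ := by simp only [Matrix.mul_assoc]
      _ = 0 := by rw [hCC']; simp only [Matrix.mul_one, Matrix.mul_assoc]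
                  rw [← Matrix.mul_assoc E E, hE,
                    Matrix.single_mul_single_of_ne (h := Ne.symm hne)]
                  simp
  have hENE : E * (N * E) = N iN i0 • E := by
    rw [← Matrix.mul_assoc, hE, sand1, ← hE, hN, hE]
  have hNEN : N * (E * N) = N iN i0 • N := by
    have key : N * (E * N) = (Cm⁻¹ * E * Cm) iN i0 • N := by
      rw [hN]
      calc Cm * E * Cm⁻¹ * (E * (Cm * E * Cm⁻¹))
          = Cm * (E * (Cm⁻¹ * E * Cm) * E) * Cm⁻¹ := by simp only [Matrix.mul_assoc]
        _ = Cm * ((Cm⁻¹ * E * Cm) iN i0 • E) * Cm⁻¹ := by rw [hE, sand1]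
        _ = (Cm⁻¹ * E * Cm) iN i0 • (Cm * E * Cm⁻¹) := by
            rw [Matrix.mul_smul, Matrix.smul_mul]
    rw [key, hE]
    congr 1
    rw [sandwich, hN, hE, sandwich, mul_comm]
  exact ⟨hEE, hNN, hENE, hNEN⟩
end algebra_facts

section monoid
variable {M : Type*} [Monoid M]

lemma conj_pow_aux (u x : M) (hu : u * u = 1) (i : ℕ) :
    u * x ^ i * u = (u * x * u) ^ i := by
  induction i with
  | zero => simpa using hu
  | succ i ih =>
    rw [pow_succ, pow_succ, ← ih]
    have : (u * x ^ i * u) * (u * x * u) = u * x ^ i * ((u * u) * x) * u := by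
      simp only [mul_assoc]
    rw [this, hu, one_mul, mul_assoc (u * x ^ i) x u, ← mul_assoc (u * x ^ i),
      ← mul_assoc u (x ^ i) x]

lemma telescope (r s : M) (hr : r * r = 1) (hs : s * s = 1) (j : ℕ) :
    (s * r) ^ j * (r * s) ^ j = 1 := by
  induction j with
  | zero => simp
  | succ j ih =>
    rw [pow_succ, pow_succ']
    have h1 : (s * r) ^ j * (s * r) * ((r * s) * (r * s) ^ j)
        = (s * r) ^ j * (s * ((r * r) * s)) * (r * s) ^ j := by simp only [mul_assoc]
    rw [h1, hr, one_mul, hs, mul_one, ih]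

lemma endgame (r s : M) (hr : r * r = 1) (hs : s * s = 1) (j : ℕ)
    (hm : (r * s) ^ (2 * j + 1) = 1) : (r * s) ^ j * r = s * (r * s) ^ j := by
  set t := r * s with ht
  have h2j : t ^ (2 * j) * r = s := by
    have h1 : t ^ (2 * j) * t = 1 := by rw [← pow_succ, hm]
    have h2 : ((t ^ (2 * j) * r) * s) * s = s := by
      rw [mul_assoc (t ^ (2*j)) r s, ← ht, h1, one_mul]
    calc t ^ (2 * j) * r = t ^ (2 * j) * r * (s * s) := by rw [hs, mul_one]
      _ = ((t ^ (2 * j) * r) * s) * s := by simp only [mul_assoc]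
      _ = s := h2
  have hab : (s * t ^ j) * (t ^ j * r) = 1 := by
    calc (s * t ^ j) * (t ^ j * r) = s * ((t ^ j * t ^ j) * r) := by simp only [mul_assoc]
      _ = s * (t ^ (2 * j) * r) := by rw [← pow_add, two_mul]
      _ = 1 := by rw [h2j, hs]
  have hsts : s * t ^ j * s = (s * r) ^ j := by
    rw [conj_pow_aux s t hs j]
    have : s * t * s = s * r := by
      rw [ht, ← mul_assoc, mul_assoc (s*r) s s, hs, mul_one]
    rw [this]
  have haa : (s * t ^ j) * (s * t ^ j) = 1 := by
    calc (s * t ^ j) * (s * t ^ j) = (s * t ^ j * s) * t ^ j := by simp only [mul_assoc]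
      _ = (s * r) ^ j * t ^ j := by rw [hsts]
      _ = 1 := telescope r s hr hs j
  calc t ^ j * r = 1 * (t ^ j * r) := (one_mul _).symm
    _ = ((s * t ^ j) * (s * t ^ j)) * (t ^ j * r) := by rw [haa]
    _ = (s * t ^ j) * ((s * t ^ j) * (t ^ j * r)) := by simp only [mul_assoc]
    _ = (s * t ^ j) * 1 := by rw [hab]
    _ = s * t ^ j := mul_one _

end monoid

section main
open Polynomial
variable [Fintype F] [CharP F 2]

lemma main_helper (i0 iN : Fin n) (hne : i0 ≠ iN)
    (Cm : Matrix (Fin n) (Fin n) F) (hC : IsUnit Cm.det)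
    (dvd_lem : ∀ c : F, c ≠ 0 → ((X : F[X]) - 1) * (X ^ 2 + C c * X + 1) ∣
      (X : F[X]) ^ (Fintype.card F ^ 2 - 1) - 1) :
    ∀ r s : Matrix (Fin n) (Fin n) F,
    r = 1 + single i0 iN (1:F) →
    s = 1 + Cm * single i0 iN (1:F) * Cm⁻¹ →
    ((r * s) ^ 2 = (s * r) ^ 2 ∨ ∃ k ∈ Submonoid.closure {r, s}, k * r = s * k) := by
  intro r s hr hs
  haveI : Nonempty (Fin n) := ⟨i0⟩
  haveI hMchar : CharP (Matrix (Fin n) (Fin n) F) 2 := Matrix.charP 2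
  set E : Matrix (Fin n) (Fin n) F := single i0 iN (1:F) with hEdef
  set N : Matrix (Fin n) (Fin n) F := Cm * E * Cm⁻¹ with hNdef
  obtain ⟨hEE, hNN, hENE, hNEN⟩ :=
    matrix_relations i0 iN hne Cm hC E N rfl rfl
  set c : F := N iN i0 with hcdef
  have hEEN : E * (E * N) = 0 := by rw [← mul_assoc, hEE, zero_mul]
  have hNNE : N * (N * E) = 0 := by rw [← mul_assoc, hNN, zero_mul]
  have hadd : ∀ X : Matrix (Fin n) (Fin n) F, X + X = 0 :=
    fun X => CharTwo.add_self_eq_zero X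
  have h2n : ∀ X : Matrix (Fin n) (Fin n) F, (2:ℕ) • X = 0 :=
    fun X => by rw [two_smul]; exact hadd X
  have h2M : (2 : Matrix (Fin n) (Fin n) F) = 0 := by
    exact_mod_cast CharP.cast_eq_zero (Matrix (Fin n) (Fin n) F) 2
  have hrr : r * r = 1 := by
    have h : (1 + E) * (1 + E) = 1 + (E + E) + E * E := by noncomm_ring
    rw [hr, h, hEE, hadd, add_zero, add_zero]
  have hss : s * s = 1 := by
    have h : (1 + N) * (1 + N) = 1 + (N + N) + N * N := by noncomm_ring
    rw [hs, h, hNN, hadd, add_zero, add_zero]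
  have hrs2 : (r * s) ^ 2 = 1 + (E*N + N*E + c • E + c • N + c • (E*N)) := by
    have h1 : (r * s) ^ 2 = 1 + ((E + N + E*N) + (E + N + E*N))
        + (E + N + E*N) * (E + N + E*N) := by
      rw [hr, hs]; noncomm_ring
    rw [h1, hadd, add_zero]
    simp only [mul_add, add_mul, mul_assoc, hEE, hNN, hEEN, hNEN, hENE, hNNE,
      mul_zero, zero_mul, mul_smul_comm, smul_zero, add_zero, zero_add]
    abel_nf
    all_goals simp [h2n, h2M]
    all_goals try abel
  have hsr2 : (s * r) ^ 2 = 1 + (E*N + N*E + c • E + c • N + c • (N*E)) := by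
    have h1 : (s * r) ^ 2 = 1 + ((E + N + N*E) + (E + N + N*E))
        + (E + N + N*E) * (E + N + N*E) := by
      rw [hr, hs]; noncomm_ring
    rw [h1, hadd, add_zero]
    simp only [mul_add, add_mul, mul_assoc, hEE, hNN, hEEN, hNEN, hENE, hNNE,
      mul_zero, zero_mul, mul_smul_comm, smul_zero, add_zero, zero_add]
    abel_nf
    all_goals simp [h2n, h2M]
    all_goals try abel
  by_cases hc : c = 0
  · left
    rw [hrs2, hsr2, hc]
    simp
  · right
    set t : Matrix (Fin n) (Fin n) F := r * s with htdef
    have ht : t = 1 + (E + N + E*N) := by rw [htdef, hr, hs]; noncomm_ring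
    have ht1 : t - 1 = E + N + E*N := by rw [ht]; abel
    have ht2 : t * t + c • t + 1 = E*N + N*E + c • (1 : Matrix (Fin n) (Fin n) F) := by
      have h1 : t * t = 1 + ((E + N + E*N) + (E + N + E*N))
          + (E + N + E*N) * (E + N + E*N) := by rw [ht]; noncomm_ring
      rw [h1, hadd, add_zero, ht]
      simp only [mul_add, add_mul, mul_assoc, hEE, hNN, hEEN, hNEN, hENE, hNNE,
        mul_zero, zero_mul, mul_smul_comm, smul_zero, smul_add, add_zero, zero_add]
      abel_nf
      all_goals simp [h2n, h2M]
      all_goals try abel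
    have hfac : (t - 1) * (t * t + c • t + 1) = 0 := by
      rw [ht1, ht2]
      simp only [mul_add, add_mul, mul_one, mul_assoc, hEE, hNN, hEEN, hNEN, hENE, hNNE,
        mul_zero, zero_mul, mul_smul_comm, smul_zero, smul_add, add_zero, zero_add]
      abel_nf
      all_goals simp [h2n, h2M]
      all_goals try abel
    set m := Fintype.card F ^ 2 - 1 with hmdef
    have haeval : (Polynomial.aeval t) (((X : F[X]) - 1) * (X ^ 2 + C c * X + 1)) = 0 := by
      rw [_root_.map_mul, _root_.map_sub, _root_.map_one, aeval_X, _root_.map_add, _root_.map_add, _root_.map_one, _root_.map_pow,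
        aeval_X, _root_.map_mul, aeval_C, aeval_X, sq, ← Algebra.smul_def]
      exact hfac
    obtain ⟨g, hg⟩ := dvd_lem c hc
    have htm : t ^ m = 1 := by
      have h0 : (Polynomial.aeval t) ((X : F[X]) ^ m - 1) = 0 := by
        rw [hg, _root_.map_mul, haeval, zero_mul]
      rw [_root_.map_sub, _root_.map_pow, aeval_X, _root_.map_one] at h0
      exact sub_eq_zero.mp h0
    obtain ⟨k, hk2, hqc⟩ := FiniteField.card F 2
    have hodd : Odd m := by
      refine Nat.Even.sub_odd (Nat.one_le_pow _ _ Fintype.card_pos) ?_ odd_one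
      rw [hqc, ← pow_mul]
      exact Nat.even_pow.mpr ⟨even_two, by positivity⟩
    obtain ⟨j, hj⟩ := hodd
    refine ⟨t ^ j, ?_, ?_⟩
    · have hrmem : r ∈ Submonoid.closure {r, s} :=
        Submonoid.subset_closure (Set.mem_insert _ _)
      have hsmem : s ∈ Submonoid.closure {r, s} :=
        Submonoid.subset_closure (Set.mem_insert_of_mem _ rfl)
      exact pow_mem (mul_mem hrmem hsmem) j
    · exact endgame r s hrr hss j (by rw [← hj]; exact htm)
end main

end Stmt13Aux

/-- Let `q` be even, `n ≥ 2`, and `O` the conjugacy class in `SL_n(q)` of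
`r = I_n + e_{1,n}` (unipotent of type `(2,1,…,1)`).  Then for any `s ∈ O` with
`[r, s] ≠ 1`, either `(rs)² = (sr)²` or the conjugacy classes of `r` and `s`
in `⟨r, s⟩` coincide; consequently `O` is not of type D. -/
theorem stmt13 {F : Type*} [Field F] [Fintype F] [CharP F 2]
    (n : ℕ) (hn : 2 ≤ n) :
    let r : Matrix (Fin n) (Fin n) F :=
      1 + Matrix.single ⟨0, by omega⟩ ⟨n - 1, by omega⟩ 1
    let O : Set (Matrix (Fin n) (Fin n) F) :=
      {m | ∃ C : Matrix (Fin n) (Fin n) F, C.det = 1 ∧ m = C * r * C⁻¹}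
    (∀ s ∈ O, r * s ≠ s * r →
      ((r * s) ^ 2 = (s * r) ^ 2 ∨ ∃ k ∈ Submonoid.closure {r, s}, k * r = s * k)) ∧
    ¬ ∃ r' ∈ O, ∃ s' ∈ O,
        (r' * s') ^ 2 ≠ (s' * r') ^ 2 ∧
        ¬ ∃ k ∈ Submonoid.closure {r', s'}, k * r' = s' * k := by
  intro r O
  set i0 : Fin n := ⟨0, by omega⟩ with hi0
  set iN : Fin n := ⟨n - 1, by omega⟩ with hiN
  have hne : i0 ≠ iN := by
    intro h
    have h2 := congrArg Fin.val h
    simp only [hi0, hiN] at h2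
    omega
  -- key fact for any element of O
  have key : ∀ w ∈ O, (r * w) ^ 2 = (w * r) ^ 2 ∨
      ∃ k ∈ Submonoid.closure {r, w}, k * r = w * k := by
    intro w hw
    obtain ⟨C, hdet, hwC⟩ := hw
    have hCu : IsUnit C.det := by rw [hdet]; exact isUnit_one
    have hw' : w = 1 + C * Matrix.single i0 iN (1:F) * C⁻¹ := by
      rw [hwC]
      show C * (1 + Matrix.single i0 iN (1:F)) * C⁻¹ = _
      rw [mul_add, mul_one, add_mul, Matrix.mul_nonsing_inv C hCu]
    exact Stmt13Aux.main_helper i0 iN hne C hCu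
      (fun c hc => Stmt13Aux.dvd_lem c hc) r w rfl hw'
  constructor
  · intro s hs _
    exact key s hs
  · rintro ⟨r', hr'O, s', hs'O, hsq, hnok⟩
    obtain ⟨C, hdetC, hr'⟩ := hr'O
    obtain ⟨D, hdetD, hs'⟩ := hs'O
    have hCu : IsUnit C.det := by rw [hdetC]; exact isUnit_one
    have hDu : IsUnit D.det := by rw [hdetD]; exact isUnit_one
    have hCC : C * C⁻¹ = 1 := Matrix.mul_nonsing_inv C hCu
    have hCC' : C⁻¹ * C = 1 := Matrix.nonsing_inv_mul C hCu
    -- the conjugation monoid hom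
    have hmul : ∀ x y : Matrix (Fin n) (Fin n) F,
        C * (x * y) * C⁻¹ = (C * x * C⁻¹) * (C * y * C⁻¹) := by
      intro x y
      have h1 : (C * x * C⁻¹) * (C * y * C⁻¹) = C * (x * ((C⁻¹ * C) * (y * C⁻¹))) := by
        simp only [Matrix.mul_assoc]
      rw [h1, hCC', one_mul]
      simp only [Matrix.mul_assoc]
    let φ : Matrix (Fin n) (Fin n) F →* Matrix (Fin n) (Fin n) F :=
      { toFun := fun x => C * x * C⁻¹
        map_one' := by show C * 1 * C⁻¹ = 1; rw [mul_one, hCC]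
        map_mul' := hmul }
    -- s'' ∈ O
    set s'' : Matrix (Fin n) (Fin n) F := C⁻¹ * s' * C with hs''def
    have hs''O : s'' ∈ O := by
      refine ⟨C⁻¹ * D, ?_, ?_⟩
      · rw [Matrix.det_mul, Matrix.det_nonsing_inv, hdetC, hdetD, Ring.inverse_one, one_mul]
      · rw [Matrix.mul_inv_rev, Matrix.nonsing_inv_nonsing_inv C hCu, hs''def, hs']
        simp only [Matrix.mul_assoc]
    have hφs'' : φ s'' = s' := by
      show C * (C⁻¹ * s' * C) * C⁻¹ = s'
      have h1 : C * (C⁻¹ * s' * C) * C⁻¹ = (C * C⁻¹) * s' * (C * C⁻¹) := by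
        simp only [Matrix.mul_assoc]
      rw [h1, hCC, one_mul, mul_one]
    have hφr : φ r = r' := by rw [hr']; rfl
    rcases key s'' hs''O with h | ⟨k, hkmem, hk⟩
    · apply hsq
      have h1 : (r' * s') ^ 2 = φ ((r * s'') ^ 2) := by
        rw [map_pow, map_mul, hφr, hφs'']
      have h2 : (s' * r') ^ 2 = φ ((s'' * r) ^ 2) := by
        rw [map_pow, map_mul, hφr, hφs'']
      rw [h1, h2, h]
    · apply hnok
      refine ⟨φ k, ?_, ?_⟩
      · have hmem : φ k ∈ (Submonoid.closure {r, s''}).map φ :=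
          Submonoid.mem_map_of_mem φ hkmem
        rw [MonoidHom.map_mclosure, Set.image_pair, hφr, hφs''] at hmem
        exact hmem
      · rw [← hφr, ← hφs'', ← map_mul, ← map_mul, hk]
end
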